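/- arXiv:0711.0170 — 8 statements merged into one kernel-verified Lean document; each statement's English description precedes it below -/
import Mathlib

section
/- Let f : 𝔻 → ℂ be analytic on the unit disc with power series f(z) = Σ aₙ zⁿ. Then the Euclidean area of the image counting multiplicity equals π Σ_{n≥1} n |aₙ|², i.e. ∫_𝔻 |f'(z)|² dA(z) = π Σ_{n≥1} n |aₙ|². -/
open MeasureTheory Metric Real Set Filter Topology

section AreaTheoremAux

private lemma circInt (k : ℤ) (hk : k ≠ 0) :
    ∫ θ in Ioo (-π) π, Complex.exp (k * θ * Complex.I) = 0 := by
  have hc : (k : ℂ) * Complex.I ≠ 0 := by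
    simp [Complex.I_ne_zero, hk]
  have h := integral_exp_mul_complex (a := -π) (b := π) hc
  have h2 : ∀ θ : ℝ, (k : ℂ) * Complex.I * θ = k * θ * Complex.I := by intro θ; ring
  rw [intervalIntegral.integral_of_le (by linarith [pi_pos] : -π ≤ π),
    MeasureTheory.integral_Ioc_eq_integral_Ioo] at h
  simp_rw [← h2]
  rw [h]
  have e1 : Complex.exp ((k : ℂ) * Complex.I * π) = (-1 : ℂ) ^ k := by
    rw [show (k : ℂ) * Complex.I * π = k * (π * Complex.I) by ring, Complex.exp_int_mul,
      Complex.exp_pi_mul_I]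
  have e2 : Complex.exp ((k : ℂ) * Complex.I * ((-π : ℝ) : ℂ)) = ((-1 : ℂ) ^ k)⁻¹ := by
    rw [show (k : ℂ) * Complex.I * ((-π : ℝ) : ℂ) = ((-k : ℤ) : ℂ) * (π * Complex.I) by
      push_cast; ring, Complex.exp_int_mul, Complex.exp_pi_mul_I, zpow_neg]
  have e4 : ((-1 : ℂ) ^ k) * ((-1 : ℂ) ^ k) = 1 := by
    rw [← zpow_add₀ (by norm_num : (-1:ℂ) ≠ 0), show k + k = 2 * k by ring, zpow_mul]
    norm_num
  rw [e1, e2, inv_eq_of_mul_eq_one_right e4, sub_self, zero_div]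

private lemma intC {μ : MeasureTheory.Measure ℝ} (f : ℝ → ℝ) :
    ∫ x, ((f x : ℝ) : ℂ) ∂μ = ((∫ x, f x ∂μ : ℝ) : ℂ) :=
  integral_ofReal

private lemma orth (R : ℝ) (hR : 0 ≤ R) (n m : ℕ) :
    ∫ z in ball (0:ℂ) R, z ^ n * (starRingEnd ℂ) z ^ m =
      if n = m then ((π * R ^ (2 * n + 2) / (n + 1) : ℝ) : ℂ) else 0 := by
  set g : ℂ → ℂ := (ball (0:ℂ) R).indicator (fun z => z ^ n * (starRingEnd ℂ) z ^ m) with hg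
  set S : Set (ℝ × ℝ) := Ioo 0 R ×ˢ Ioo (-π) π with hS
  set F : ℝ × ℝ → ℂ := fun p => ((p.1 : ℂ)) ^ (n + m + 1) *
      Complex.exp ((((n : ℤ) - (m : ℤ) : ℤ) : ℂ) * p.2 * Complex.I) with hF
  have hW : ∀ p : ℝ × ℝ, 0 < p.1 →
      p.1 • ((Complex.polarCoord.symm p) ^ n *
        (starRingEnd ℂ) (Complex.polarCoord.symm p) ^ m) = F p := by
    rintro ⟨x, θ⟩ hx
    simp only [Complex.polarCoord_symm_apply]
    have hcs : ((Real.cos θ : ℂ) + (Real.sin θ : ℂ) * Complex.I) = Complex.exp (θ * Complex.I) := by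
      rw [Complex.exp_mul_I]; push_cast; ring
    rw [hcs]
    have hconj : (starRingEnd ℂ) ((x : ℂ) * Complex.exp (θ * Complex.I)) =
        (x : ℂ) * Complex.exp (-(θ * Complex.I)) := by
      rw [map_mul, Complex.conj_ofReal, ← Complex.exp_conj]
      congr 1
      simp [Complex.conj_ofReal]
    rw [hconj]
    simp only [F, Complex.real_smul]
    rw [mul_pow, mul_pow, ← Complex.exp_nat_mul, ← Complex.exp_nat_mul]
    rw [show (x:ℂ) * ((x:ℂ)^n * Complex.exp (n * (θ * Complex.I)) *
        ((x:ℂ)^m * Complex.exp (m * -(θ * Complex.I)))) =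
        (x:ℂ)^(n+m+1) * (Complex.exp (n * (θ * Complex.I)) *
          Complex.exp (m * -(θ * Complex.I))) by ring, ← Complex.exp_add]
    congr 2
    push_cast
    ring
  have key : ∫ z in ball (0:ℂ) R, z ^ n * (starRingEnd ℂ) z ^ m = ∫ p in S, F p := by
    rw [← integral_indicator measurableSet_ball, ← hg,
      ← Complex.integral_comp_polarCoord_symm g]
    have h1 : ∀ p ∈ polarCoord.target, p.1 • g (Complex.polarCoord.symm p) =
        S.indicator F p := by
      rintro ⟨x, θ⟩ hp
      rw [polarCoord_target] at hp
      obtain ⟨hx, hθ⟩ := hp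
      simp only [mem_Ioi] at hx
      by_cases hxR : x < R
      · have hmem : Complex.polarCoord.symm (x, θ) ∈ ball (0:ℂ) R := by
          rw [mem_ball_zero_iff, Complex.norm_polarCoord_symm]
          simpa [abs_of_pos hx]
        have hmemS : ((x, θ) : ℝ × ℝ) ∈ S := by
          exact ⟨⟨hx, hxR⟩, hθ⟩
        rw [hg, indicator_of_mem hmem, indicator_of_mem hmemS]
        exact hW (x, θ) hx
      · have hmem : Complex.polarCoord.symm (x, θ) ∉ ball (0:ℂ) R := by
          rw [mem_ball_zero_iff, Complex.norm_polarCoord_symm]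
          simpa [abs_of_pos hx] using hxR
        have hmemS : ((x, θ) : ℝ × ℝ) ∉ S := by
          simp only [S, mem_prod, mem_Ioo, not_and]
          intro h; exact absurd h.2 hxR
        rw [hg, indicator_of_notMem hmem, indicator_of_notMem hmemS, smul_zero]
    rw [setIntegral_congr_fun polarCoord.open_target.measurableSet h1,
      setIntegral_indicator (by measurability : MeasurableSet S),
      polarCoord_target, show (Ioi (0:ℝ) ×ˢ Ioo (-π) π) ∩ S = S by
        rw [inter_eq_self_of_subset_right]
        exact prod_mono Ioo_subset_Ioi_self (subset_refl _)]
  rw [key]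
  -- now compute the product integral
  have hFc : Continuous F := by fun_prop
  have hFi : IntegrableOn F S := by
    exact (hFc.continuousOn.integrableOn_compact
      ((isCompact_Icc (a := (0:ℝ)) (b := R)).prod (isCompact_Icc (a := -π) (b := π)))).mono_set
      (prod_mono Ioo_subset_Icc_self Ioo_subset_Icc_self)
  rw [show (volume : Measure (ℝ × ℝ)) = volume.prod volume from Measure.volume_eq_prod ℝ ℝ, hS] at hFi ⊢
  rw [setIntegral_prod _ hFi]
  simp only [F]
  by_cases hnm : n = m
  · subst hnm
    rw [if_pos rfl]
    simp only [sub_self, Int.cast_zero, zero_mul, Complex.exp_zero, mul_one]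
    have : ∀ x : ℝ, ∫ _ in Ioo (-π) π, ((x:ℂ))^(n+n+1) = ((2*π*x^(n+n+1) : ℝ) : ℂ) := by
      intro x
      rw [setIntegral_const, Real.volume_real_Ioo_of_le (by linarith [pi_pos]), Complex.real_smul]
      push_cast
      ring
    rw [setIntegral_congr_fun measurableSet_Ioo (fun x _ => this x), intC]
    norm_cast
    rw [← MeasureTheory.integral_Ioc_eq_integral_Ioo, ← intervalIntegral.integral_of_le hR,
      intervalIntegral.integral_const_mul, integral_pow, zero_pow (by omega)]
    have h1 : ((n:ℝ)+n+1+1) ≠ 0 := by positivity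
    have h2 : ((n:ℝ)+1) ≠ 0 := by positivity
    push_cast
    field_simp
    ring
  · rw [if_neg hnm]
    have hk : ((n : ℤ) - m) ≠ 0 := by
      simpa [sub_eq_zero] using fun h => hnm (by exact_mod_cast h)
    have : ∀ x : ℝ, ∫ θ in Ioo (-π) π, ((x:ℂ))^(n+m+1) *
        Complex.exp ((((n : ℤ) - (m : ℤ) : ℤ) : ℂ) * θ * Complex.I) = 0 := by
      intro x
      rw [MeasureTheory.integral_const_mul, circInt _ hk, mul_zero]
    rw [setIntegral_congr_fun measurableSet_Ioo (fun x _ => this x)]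
    simp

private lemma intBall {R : ℝ} {h : ℂ → ℂ} (hc : Continuous h) :
    IntegrableOn h (ball (0:ℂ) R) :=
  (hc.continuousOn.integrableOn_compact (isCompact_closedBall _ _)).mono_set
    ball_subset_closedBall

private lemma sq_int (R : ℝ) (hR : 0 ≤ R) (c : ℕ → ℂ) (N : ℕ) :
    ∫ z in ball (0:ℂ) R, ‖∑ k ∈ Finset.range N, c k * z ^ k‖ ^ 2 =
      ∑ k ∈ Finset.range N, ‖c k‖ ^ 2 * (π * R ^ (2 * k + 2) / (k + 1)) := by
  set S : ℂ → ℂ := fun z => ∑ k ∈ Finset.range N, c k * z ^ k with hSdef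
  have hSc : Continuous S := by
    apply continuous_finset_sum
    intro k _
    exact continuous_const.mul (continuous_pow k)
  have hpt : ∀ w : ℂ, ‖w‖ ^ 2 = (w * (starRingEnd ℂ) w).re := fun w => by
    rw [Complex.mul_conj]
    simp [Complex.normSq_eq_norm_sq, ← Complex.ofReal_pow]
  have hInt : IntegrableOn (fun z => S z * (starRingEnd ℂ) (S z)) (ball (0:ℂ) R) :=
    intBall (hSc.mul (continuous_star.comp hSc))
  have step1 : ∫ z in ball (0:ℂ) R, ‖S z‖ ^ 2 =
      (∫ z in ball (0:ℂ) R, S z * (starRingEnd ℂ) (S z)).re := by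
    have h := integral_re (μ := volume.restrict (ball (0:ℂ) R)) hInt
    rw [RCLike.re_eq_complex_re] at h
    rw [← h]
    exact setIntegral_congr_fun measurableSet_ball (fun z _ => hpt (S z))
  have expand : ∀ z : ℂ, S z * (starRingEnd ℂ) (S z) =
      ∑ k ∈ Finset.range N, ∑ l ∈ Finset.range N,
        (c k * (starRingEnd ℂ) (c l)) * (z ^ k * (starRingEnd ℂ) z ^ l) := by
    intro z
    rw [hSdef]
    simp only [map_sum, map_mul, map_pow, Finset.sum_mul_sum]
    apply Finset.sum_congr rfl; intro k _
    apply Finset.sum_congr rfl; intro l _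
    ring
  have step2 : ∫ z in ball (0:ℂ) R, S z * (starRingEnd ℂ) (S z) =
      ∑ k ∈ Finset.range N, (c k * (starRingEnd ℂ) (c k)) *
        ((π * R ^ (2 * k + 2) / (k + 1) : ℝ) : ℂ) := by
    rw [setIntegral_congr_fun measurableSet_ball (fun z _ => expand z),
      integral_finset_sum _ (fun k _ => ?_)]
    · apply Finset.sum_congr rfl
      intro k hk
      rw [integral_finset_sum _ (fun l _ => ?_)]
      · rw [Finset.sum_eq_single_of_mem k hk]
        · rw [MeasureTheory.integral_const_mul, orth R hR k k, if_pos rfl]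
        · intro l _ hlk
          rw [MeasureTheory.integral_const_mul, orth R hR k l, if_neg (Ne.symm hlk), mul_zero]
      · exact intBall ((continuous_const.mul
          ((continuous_pow k).mul ((continuous_star.comp continuous_id).pow l))))
    · apply integrable_finset_sum
      intro l _
      exact intBall ((continuous_const.mul
          ((continuous_pow k).mul ((continuous_star.comp continuous_id).pow l))))
  rw [step1, step2, Complex.re_sum]
  apply Finset.sum_congr rfl
  intro k _
  rw [Complex.mul_conj, ← Complex.ofReal_mul, Complex.ofReal_re, Complex.normSq_eq_norm_sq]

private lemma sum_j1 {x : ℝ} (h0 : 0 ≤ x) (h1 : x < 1) :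
    Summable (fun j : ℕ => ((j : ℝ) + 1) * x ^ j) := by
  have h := summable_pow_mul_geometric_of_norm_lt_one (R := ℝ) 1
    (by rwa [Real.norm_eq_abs, abs_of_nonneg h0])
  simpa [add_mul, pow_one] using h.add (summable_geometric_of_lt_one h0 h1)

private lemma aux_eq1 (M r ρ : ℝ) (hρ : ρ ≠ 0) (j : ℕ) :
    ((j : ℝ) + 1) * (M / ρ ^ (j + 1)) * r ^ j = (M / ρ) * (((j : ℝ) + 1) * (r / ρ) ^ j) := by
  rw [div_pow, pow_succ]
  field_simp

private lemma aux_eq2 (M r ρ : ℝ) (hρ : ρ ≠ 0) (j : ℕ) :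
    ((j : ℝ) + 1) * (M / ρ ^ (j + 1)) ^ 2 * (π * r ^ (2 * j + 2)) =
      (π * M ^ 2 * (r / ρ) ^ 2) * (((j : ℝ) + 1) * ((r / ρ) ^ 2) ^ j) := by
  rw [div_pow, div_pow]
  field_simp
  rw [div_pow]
  field_simp
  ring

variable {f : ℂ → ℂ} {a : ℕ → ℂ}
  (ha : ∀ z ∈ ball (0:ℂ) 1, HasSum (fun n => a n * z ^ n) (f z))
include ha

private lemma sum_norm {r : ℝ} (h0 : 0 ≤ r) (h1 : r < 1) :
    Summable (fun n => ‖a n‖ * r ^ n) := by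
  have hz : ((r : ℂ)) ∈ ball (0:ℂ) 1 := by
    simp [mem_ball_zero_iff, Complex.norm_real, abs_of_nonneg h0, h1]
  refine ((ha _ hz).summable).norm.congr fun n => ?_
  rw [norm_mul, norm_pow, Complex.norm_real, Real.norm_eq_abs, abs_of_nonneg h0]

private lemma bdd_coef {ρ : ℝ} (h0 : 0 ≤ ρ) (h1 : ρ < 1) :
    ∃ M : ℝ, ∀ n, ‖a n‖ * ρ ^ n ≤ M := by
  obtain ⟨M, hM⟩ := (sum_norm ha h0 h1).tendsto_atTop_zero.bddAbove_range
  exact ⟨M, fun n => hM (Set.mem_range_self n)⟩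

private lemma sum_deriv {r : ℝ} (h0 : 0 ≤ r) (h1 : r < 1) :
    Summable (fun j : ℕ => ((j : ℝ) + 1) * ‖a (j + 1)‖ * r ^ j) := by
  set ρ : ℝ := (r + 1) / 2 with hρ
  have hρ1 : ρ < 1 := by simp only [hρ]; linarith
  have hrρ : r < ρ := by simp only [hρ]; linarith
  have hρpos : 0 < ρ := lt_of_le_of_lt h0 hrρ
  obtain ⟨M, hM⟩ := bdd_coef ha hρpos.le hρ1
  have hx0 : 0 ≤ r / ρ := by positivity
  have hx1 : r / ρ < 1 := (div_lt_one hρpos).2 hrρ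
  refine Summable.of_nonneg_of_le (fun j => by positivity) (fun j => ?_)
    ((sum_j1 hx0 hx1).mul_left (M / ρ))
  have hle : ‖a (j + 1)‖ ≤ M / ρ ^ (j + 1) := by
    rw [le_div_iff₀ (pow_pos hρpos _)]
    exact hM (j + 1)
  calc ((j : ℝ) + 1) * ‖a (j + 1)‖ * r ^ j
      ≤ ((j : ℝ) + 1) * (M / ρ ^ (j + 1)) * r ^ j :=
        mul_le_mul_of_nonneg_right (mul_le_mul_of_nonneg_left hle (by positivity))
          (pow_nonneg h0 j)
    _ = (M / ρ) * (((j : ℝ) + 1) * (r / ρ) ^ j) := aux_eq1 M r ρ hρpos.ne' j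

private lemma sum_sq {r : ℝ} (h0 : 0 ≤ r) (h1 : r < 1) :
    Summable (fun j : ℕ => ((j : ℝ) + 1) * ‖a (j + 1)‖ ^ 2 * (π * r ^ (2 * j + 2))) := by
  set ρ : ℝ := (r + 1) / 2 with hρ
  have hρ1 : ρ < 1 := by simp only [hρ]; linarith
  have hrρ : r < ρ := by simp only [hρ]; linarith
  have hρpos : 0 < ρ := lt_of_le_of_lt h0 hrρ
  obtain ⟨M, hM⟩ := bdd_coef ha hρpos.le hρ1
  have hx0 : 0 ≤ r / ρ := by positivity
  have hx1 : r / ρ < 1 := (div_lt_one hρpos).2 hrρ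
  have hy0 : 0 ≤ (r / ρ) ^ 2 := by positivity
  have hy1 : (r / ρ) ^ 2 < 1 := pow_lt_one₀ hx0 hx1 (by norm_num)
  refine Summable.of_nonneg_of_le (fun j => by positivity) (fun j => ?_)
    ((sum_j1 hy0 hy1).mul_left (π * M ^ 2 * (r / ρ) ^ 2))
  have hle : ‖a (j + 1)‖ ≤ M / ρ ^ (j + 1) := by
    rw [le_div_iff₀ (pow_pos hρpos _)]
    exact hM (j + 1)
  have hle2 : ‖a (j + 1)‖ ^ 2 ≤ (M / ρ ^ (j + 1)) ^ 2 :=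
    pow_le_pow_left₀ (norm_nonneg _) hle 2
  calc ((j : ℝ) + 1) * ‖a (j + 1)‖ ^ 2 * (π * r ^ (2 * j + 2))
      ≤ ((j : ℝ) + 1) * (M / ρ ^ (j + 1)) ^ 2 * (π * r ^ (2 * j + 2)) := by
        apply mul_le_mul_of_nonneg_right (mul_le_mul_of_nonneg_left hle2 (by positivity))
          (by positivity)
    _ = (π * M ^ 2 * (r / ρ) ^ 2) * (((j : ℝ) + 1) * ((r / ρ) ^ 2) ^ j) :=
        aux_eq2 M r ρ hρpos.ne' j

private lemma derivRep {z : ℂ} (hz : z ∈ ball (0:ℂ) 1) :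
    HasSum (fun j : ℕ => ((j : ℂ) + 1) * a (j + 1) * z ^ j) (deriv f z) := by
  set ρ : ℝ := (‖z‖ + 1) / 2 with hρ
  have hz1 : ‖z‖ < 1 := mem_ball_zero_iff.mp hz
  have hρ0 : 0 ≤ ρ := by positivity
  have hρ1 : ρ < 1 := by simp only [hρ]; linarith
  have hzρ : ‖z‖ < ρ := by simp only [hρ]; linarith
  have hU : z ∈ ball (0:ℂ) ρ := mem_ball_zero_iff.mpr hzρ
  have hsub : ball (0:ℂ) ρ ⊆ ball (0:ℂ) 1 := ball_subset_ball hρ1.le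
  have hs := Complex.hasSum_deriv_of_summable_norm (F := fun (i : ℕ) (w : ℂ) => a i * w ^ i)
    (u := fun i => ‖a i‖ * ρ ^ i) (sum_norm ha hρ0 hρ1)
    (fun i => ((differentiable_const _).mul (differentiable_pow i)).differentiableOn)
    isOpen_ball
    (fun i w hw => by
      rw [norm_mul, norm_pow]
      exact mul_le_mul_of_nonneg_left
        (pow_le_pow_left₀ (norm_nonneg w) (mem_ball_zero_iff.mp hw).le i) (norm_nonneg _))
    hU
  have hder : ∀ i : ℕ, deriv (fun w : ℂ => a i * w ^ i) z = a i * ((i : ℂ) * z ^ (i - 1)) := by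
    intro i
    exact (((hasDerivAt_pow i z).const_mul (a i))).deriv
  have heq : deriv (fun w : ℂ => ∑' i, a i * w ^ i) z = deriv f z := by
    apply Filter.EventuallyEq.deriv_eq
    filter_upwards [isOpen_ball.mem_nhds (hsub hU)] with w hw
    exact (ha w hw).tsum_eq
  rw [heq] at hs
  simp_rw [hder] at hs
  have hshift : HasSum (fun j : ℕ => a (j + 1) * (((j + 1 : ℕ) : ℂ) * z ^ (j + 1 - 1)))
      (deriv f z - ∑ i ∈ Finset.range 1, a i * ((i : ℂ) * z ^ (i - 1))) :=
    (hasSum_nat_add_iff' 1).mpr hs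
  have hz0 : ∑ i ∈ Finset.range 1, a i * ((i : ℂ) * z ^ (i - 1)) = 0 := by simp
  rw [hz0, sub_zero] at hshift
  have hfe : (fun j : ℕ => a (j + 1) * (((j + 1 : ℕ) : ℂ) * z ^ (j + 1 - 1))) =
      (fun j : ℕ => ((j : ℂ) + 1) * a (j + 1) * z ^ j) := by
    funext j
    push_cast
    ring
  rw [hfe] at hshift
  exact hshift

private lemma radius_formula {r : ℝ} (h0 : 0 ≤ r) (h1 : r < 1) :
    ∫ z in ball (0:ℂ) r, ‖deriv f z‖ ^ 2 =
      ∑' j : ℕ, ((j : ℝ) + 1) * ‖a (j + 1)‖ ^ 2 * (π * r ^ (2 * j + 2)) := by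
  set c : ℕ → ℂ := fun j => ((j : ℂ) + 1) * a (j + 1) with hc
  set G : ℕ → ℂ → ℂ := fun N z => ∑ j ∈ Finset.range N, c j * z ^ j with hG
  have hnc : ∀ j : ℕ, ‖c j‖ = ((j : ℝ) + 1) * ‖a (j + 1)‖ := by
    intro j
    rw [hc, norm_mul]
    congr 1
    rw [show ((j : ℂ) + 1) = ((j + 1 : ℕ) : ℂ) by push_cast; ring, Complex.norm_natCast]
    push_cast
    ring
  have hGint : ∀ N, ∫ z in ball (0:ℂ) r, ‖G N z‖ ^ 2 =
      ∑ j ∈ Finset.range N, ((j : ℝ) + 1) * ‖a (j + 1)‖ ^ 2 * (π * r ^ (2 * j + 2)) := by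
    intro N
    rw [hG, sq_int r h0 c N]
    apply Finset.sum_congr rfl
    intro j _
    rw [hnc j, mul_pow]
    have hj : ((j : ℝ) + 1) ≠ 0 := by positivity
    field_simp
  have hC := sum_deriv ha h0 h1
  set C : ℝ := ∑' j : ℕ, ((j : ℝ) + 1) * ‖a (j + 1)‖ * r ^ j with hCdef
  have hGbound : ∀ N, ∀ z ∈ ball (0:ℂ) r, ‖G N z‖ ≤ C := by
    intro N z hz
    have hzr : ‖z‖ ≤ r := (mem_ball_zero_iff.mp hz).le
    calc ‖G N z‖ ≤ ∑ j ∈ Finset.range N, ‖c j * z ^ j‖ := norm_sum_le _ _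
      _ ≤ ∑ j ∈ Finset.range N, ((j : ℝ) + 1) * ‖a (j + 1)‖ * r ^ j := by
          apply Finset.sum_le_sum
          intro j _
          rw [norm_mul, norm_pow, hnc j]
          exact mul_le_mul_of_nonneg_left (pow_le_pow_left₀ (norm_nonneg z) hzr j)
            (by positivity)
      _ ≤ C := Summable.sum_le_tsum _ (fun j _ => by positivity) hC
  have htendsto : Tendsto (fun N => ∫ z in ball (0:ℂ) r, ‖G N z‖ ^ 2) atTop
      (𝓝 (∫ z in ball (0:ℂ) r, ‖deriv f z‖ ^ 2)) := by
    apply tendsto_integral_of_dominated_convergence (bound := fun _ => C ^ 2)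
    · intro N
      apply Continuous.aestronglyMeasurable
      have : Continuous (G N) := continuous_finset_sum _
        (fun j _ => continuous_const.mul (continuous_pow j))
      exact (this.norm).pow 2
    · exact integrableOn_const (C := C ^ 2) measure_ball_lt_top.ne
    · intro N
      rw [ae_restrict_iff' measurableSet_ball]
      refine Eventually.of_forall fun z hz => ?_
      rw [Real.norm_eq_abs, abs_of_nonneg (by positivity)]
      exact pow_le_pow_left₀ (norm_nonneg _) (hGbound N z hz) 2
    · rw [ae_restrict_iff' measurableSet_ball]
      refine Eventually.of_forall fun z hz => ?_
      have hz1 : z ∈ ball (0:ℂ) 1 := ball_subset_ball h1.le hz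
      exact ((derivRep ha hz1).tendsto_sum_nat.norm).pow 2
  simp_rw [hGint] at htendsto
  exact tendsto_nhds_unique htendsto (sum_sq ha h0 h1).hasSum.tendsto_sum_nat

end AreaTheoremAux

theorem stmt0 (f : ℂ → ℂ) (a : ℕ → ℂ)
    (hf : AnalyticOn ℂ f (ball (0:ℂ) 1))
    (ha : ∀ z ∈ ball (0:ℂ) 1, HasSum (fun n => a n * z ^ n) (f z)) :
    ∫ z in ball (0:ℂ) 1, ‖deriv f z‖ ^ 2 =
      π * ∑' n : ℕ, (n : ℝ) * ‖a n‖ ^ 2 := by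
  -- deriv f is continuous on the ball
  have hfc : ContinuousOn (deriv f) (ball (0:ℂ) 1) :=
    ((isOpen_ball.analyticOn_iff_analyticOnNhd.mp hf).deriv).continuousOn
  -- integrability on small balls
  have hIntOn : ∀ {r : ℝ}, 0 ≤ r → r < 1 →
      IntegrableOn (fun z => ‖deriv f z‖ ^ 2) (ball (0:ℂ) r) := by
    intro r h0 h1
    have hsub : closedBall (0:ℂ) r ⊆ ball (0:ℂ) 1 := closedBall_subset_ball h1
    have hcont : ContinuousOn (fun z => ‖deriv f z‖ ^ 2) (closedBall (0:ℂ) r) :=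
      ((hfc.mono hsub).norm).pow 2
    exact (hcont.integrableOn_compact (isCompact_closedBall _ _)).mono_set
      ball_subset_closedBall
  set φ : ℂ → ENNReal := fun z => ENNReal.ofReal (‖deriv f z‖ ^ 2) with hφ
  have hφm : Measurable φ :=
    ENNReal.measurable_ofReal.comp ((measurable_deriv f).norm.pow_const 2)
  set rk : ℕ → ℝ := fun k => 1 - 1 / (k + 1) with hrk
  have hrk0 : ∀ k, 0 ≤ rk k := by
    intro k
    have : 1 / ((k : ℝ) + 1) ≤ 1 := by
      rw [div_le_one (by positivity)]
      linarith [Nat.cast_nonneg (α := ℝ) k]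
    simp only [hrk]; linarith
  have hrk1 : ∀ k, rk k < 1 := by
    intro k
    have : 0 < 1 / ((k : ℝ) + 1) := by positivity
    simp only [hrk]; linarith
  have hrkmono : Monotone rk := by
    intro k l hkl
    have : 1 / ((l : ℝ) + 1) ≤ 1 / ((k : ℝ) + 1) := by
      apply one_div_le_one_div_of_le (by positivity)
      exact_mod_cast by linarith [Nat.cast_le (α := ℝ).mpr hkl]
    simp only [hrk]; linarith
  have hrklim : Tendsto rk atTop (𝓝 1) := by
    have h := tendsto_one_div_add_atTop_nhds_zero_nat (𝕜 := ℝ)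
    have := tendsto_const_nhds (x := (1:ℝ)) (f := atTop (α := ℕ)) |>.sub h
    simpa [hrk] using this
  -- Step A
  have hA : ∫⁻ z in ball (0:ℂ) 1, φ z = ⨆ k, ∫⁻ z in ball (0:ℂ) (rk k), φ z := by
    have hmono : Monotone (fun k => (ball (0:ℂ) (rk k)).indicator φ) := by
      intro k l hkl z
      exact indicator_le_indicator_of_subset (ball_subset_ball (hrkmono hkl))
        (fun _ => zero_le) z
    simp_rw [← lintegral_indicator measurableSet_ball]
    rw [← lintegral_iSup (fun k => hφm.indicator measurableSet_ball) hmono]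
    congr 1
    funext z
    by_cases hz : z ∈ ball (0:ℂ) 1
    · have hz1 : ‖z‖ < 1 := mem_ball_zero_iff.mp hz
      obtain ⟨k0, hk0⟩ := (hrklim.eventually_const_lt hz1).exists
      apply le_antisymm
      · rw [indicator_of_mem hz]
        calc φ z = (ball (0:ℂ) (rk k0)).indicator φ z := by
              rw [indicator_of_mem (mem_ball_zero_iff.mpr hk0)]
          _ ≤ ⨆ k, (ball (0:ℂ) (rk k)).indicator φ z :=
              le_iSup (fun k => (ball (0:ℂ) (rk k)).indicator φ z) k0
      · exact iSup_le fun k => (indicator_le_self _ _ z).trans (by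
          rw [indicator_of_mem hz])
    · have : ∀ k, z ∉ ball (0:ℂ) (rk k) := fun k hk =>
        hz (ball_subset_ball (hrk1 k).le hk)
      simp [indicator_of_notMem, hz, this]
  -- Step B
  have hB : ∀ k, ∫⁻ z in ball (0:ℂ) (rk k), φ z =
      ∑' j : ℕ, ENNReal.ofReal (((j : ℝ) + 1) * ‖a (j + 1)‖ ^ 2 * (π * rk k ^ (2 * j + 2))) := by
    intro k
    rw [hφ, ← ofReal_integral_eq_lintegral_ofReal (hIntOn (hrk0 k) (hrk1 k))
      (Eventually.of_forall fun z => by positivity),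
      radius_formula ha (hrk0 k) (hrk1 k),
      ENNReal.ofReal_tsum_of_nonneg (fun j => mul_nonneg (by positivity)
        (mul_nonneg pi_pos.le (pow_nonneg (hrk0 k) _))) (sum_sq ha (hrk0 k) (hrk1 k))]
  -- Step C
  have hC : (⨆ k, ∑' j : ℕ,
        ENNReal.ofReal (((j : ℝ) + 1) * ‖a (j + 1)‖ ^ 2 * (π * rk k ^ (2 * j + 2)))) =
      ∑' j : ℕ, ENNReal.ofReal (((j : ℝ) + 1) * ‖a (j + 1)‖ ^ 2 * π) := by
    have hmono : Monotone (fun k => fun j : ℕ =>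
        ENNReal.ofReal (((j : ℝ) + 1) * ‖a (j + 1)‖ ^ 2 * (π * rk k ^ (2 * j + 2)))) := by
      intro k l hkl j
      apply ENNReal.ofReal_le_ofReal
      apply mul_le_mul_of_nonneg_left _ (by positivity)
      apply mul_le_mul_of_nonneg_left _ pi_pos.le
      exact pow_le_pow_left₀ (hrk0 k) (hrkmono hkl) _
    simp_rw [← lintegral_count]
    rw [← lintegral_iSup (fun k => measurable_of_countable _) hmono]
    congr 1
    funext j
    apply iSup_eq_of_tendsto (fun k l hkl => hmono hkl j)
    have h1 : Tendsto (fun k => ((j : ℝ) + 1) * ‖a (j + 1)‖ ^ 2 * (π * rk k ^ (2 * j + 2)))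
        atTop (𝓝 (((j : ℝ) + 1) * ‖a (j + 1)‖ ^ 2 * (π * 1 ^ (2 * j + 2)))) :=
      tendsto_const_nhds.mul (tendsto_const_nhds.mul (hrklim.pow _))
    rw [one_pow, mul_one] at h1
    exact ENNReal.tendsto_ofReal h1
  have hmain : ∫⁻ z in ball (0:ℂ) 1, φ z =
      ∑' j : ℕ, ENNReal.ofReal (((j : ℝ) + 1) * ‖a (j + 1)‖ ^ 2 * π) := by
    rw [hA]; simp_rw [hB]; exact hC
  by_cases hT : (∑' j : ℕ, ENNReal.ofReal (((j : ℝ) + 1) * ‖a (j + 1)‖ ^ 2 * π)) = ⊤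
  · -- non-summable case: both sides are zero
    have hnotsum : ¬ Summable (fun n : ℕ => (n : ℝ) * ‖a n‖ ^ 2) := by
      intro hsum
      have h2 : Summable (fun j : ℕ => ((j : ℝ) + 1) * ‖a (j + 1)‖ ^ 2 * π) := by
        have h3 := (summable_nat_add_iff (f := fun n : ℕ => (n : ℝ) * ‖a n‖ ^ 2) 1).2 hsum
        apply (h3.mul_right π).congr
        intro j
        push_cast
        ring
      rw [← ENNReal.ofReal_tsum_of_nonneg (fun j => by positivity) h2] at hT
      exact ENNReal.ofReal_ne_top hT
    rw [tsum_eq_zero_of_not_summable hnotsum, mul_zero]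
    apply integral_undef
    intro hint
    have hfin := hint.2
    rw [hasFiniteIntegral_iff_ofReal (Eventually.of_forall fun z => by positivity)] at hfin
    rw [show (fun z => ENNReal.ofReal (‖deriv f z‖ ^ 2)) = φ from rfl] at hfin
    rw [hmain, hT] at hfin
    exact absurd hfin (lt_irrefl _)
  · -- summable case
    have hsum2 : Summable (fun j : ℕ => ((j : ℝ) + 1) * ‖a (j + 1)‖ ^ 2 * π) := by
      have := ENNReal.summable_toReal hT
      apply this.congr
      intro j
      rw [ENNReal.toReal_ofReal (by positivity)]
    have hsum : Summable (fun n : ℕ => (n : ℝ) * ‖a n‖ ^ 2) := by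
      rw [← summable_nat_add_iff 1]
      apply (hsum2.div_const π).congr
      intro j
      rw [mul_div_assoc, div_self pi_ne_zero, mul_one]
      push_cast
      ring
    have hint : IntegrableOn (fun z => ‖deriv f z‖ ^ 2) (ball (0:ℂ) 1) := by
      constructor
      · exact ((measurable_deriv f).norm.pow_const 2).aestronglyMeasurable
      · rw [hasFiniteIntegral_iff_ofReal (Eventually.of_forall fun z => by positivity)]
        rw [show (fun z => ENNReal.ofReal (‖deriv f z‖ ^ 2)) = φ from rfl, hmain]
        exact lt_top_iff_ne_top.2 hT
    rw [integral_eq_lintegral_of_nonneg_ae (Eventually.of_forall fun z => by positivity)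
      hint.1, show (fun z => ENNReal.ofReal (‖deriv f z‖ ^ 2)) = φ from rfl, hmain,
      ENNReal.tsum_toReal_eq (fun j => ENNReal.ofReal_ne_top)]
    have htoReal : ∀ j : ℕ, (ENNReal.ofReal (((j : ℝ) + 1) * ‖a (j + 1)‖ ^ 2 * π)).toReal =
        ((j : ℝ) + 1) * ‖a (j + 1)‖ ^ 2 * π := fun j =>
      ENNReal.toReal_ofReal (by positivity)
    simp_rw [htoReal]
    rw [hsum.tsum_eq_zero_add]
    push_cast
    rw [tsum_mul_right]
    ring
end

section
/- Let f : 𝔻 → ℂ be analytic with finite Dirichlet integral A = ∫_𝔻 |f'(z)|² dA(z). Then for every z₀ ∈ 𝔻, the hyperbolic-to-Euclidean derivative norm satisfies |f'(z₀)|·(1−|z₀|²)/2 ≤ (A/(4π))^{1/2}. -/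
open MeasureTheory Metric Real

section AuxProof
open Complex

private 
lemma circle_bound (g : ℂ → ℂ) (c : ℂ) (s : ℝ) (hs : 0 < s)
    (hcont : ContinuousOn g (closedBall c s))
    (hdiff : ∀ z ∈ ball c s, DifferentiableAt ℂ g z) :
    2 * π * ‖g c‖ ≤ ∫ θ in Set.Ioo (-π) π, ‖g (circleMap c s θ)‖ := by
  have key := Complex.circleIntegral_sub_center_inv_smul_of_differentiable_on_off_countable
    hs Set.countable_empty hcont (fun z hz => hdiff z hz.1)
  have h1 : (∮ z in C(c, s), (z - c)⁻¹ • g z)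
      = I * ∫ θ in (0:ℝ)..2*π, g (circleMap c s θ) := by
    rw [circleIntegral, ← intervalIntegral.integral_const_mul]
    apply intervalIntegral.integral_congr
    intro θ _
    simp only [deriv_circleMap, circleMap_sub_center, smul_eq_mul]
    have hne : circleMap 0 s θ ≠ 0 := circleMap_ne_center hs.ne'
    field_simp
  rw [h1] at key
  have h2 : 2 * π * ‖g c‖ = ‖(2 * ↑π * I : ℂ) • g c‖ := by
    simp [norm_smul, Complex.norm_I, abs_of_pos Real.pi_pos, mul_assoc]
  rw [h2, ← key]
  have h3 : ‖I * ∫ θ in (0:ℝ)..2*π, g (circleMap c s θ)‖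
      = ‖∫ θ in (0:ℝ)..2*π, g (circleMap c s θ)‖ := by
    simp
  rw [h3]
  have h4 : ‖∫ θ in (0:ℝ)..2*π, g (circleMap c s θ)‖
      ≤ ∫ θ in (0:ℝ)..2*π, ‖g (circleMap c s θ)‖ :=
    intervalIntegral.norm_integral_le_integral_norm (by positivity)
  refine h4.trans_eq ?_
  have hper : Function.Periodic (fun θ => ‖g (circleMap c s θ)‖) (2*π) := by
    intro θ; simp [(periodic_circleMap c s) θ]
  have := hper.intervalIntegral_add_eq 0 (-π)
  rw [zero_add] at this
  rw [this]
  have : -π + 2*π = π := by ring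
  rw [this, intervalIntegral.integral_of_le (by linarith [Real.pi_pos]), 
    MeasureTheory.integral_Ioc_eq_integral_Ioo]

private lemma submean (g : ℂ → ℂ) (c : ℂ) (ρ : ℝ) (hρ : 0 < ρ)
    (hcont : ContinuousOn g (closedBall c ρ))
    (hdiff : ∀ z ∈ ball c ρ, DifferentiableAt ℂ g z) :
    π * ρ^2 * ‖g c‖ ≤ ∫ z in ball c ρ, ‖g z‖ := by
  -- translate to center 0
  have htrans : ∫ z in ball c ρ, ‖g z‖ = ∫ w in ball (0:ℂ) ρ, ‖g (c + w)‖ := by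
    rw [← integral_indicator measurableSet_ball, ← integral_indicator measurableSet_ball,
      ← integral_add_left_eq_self (fun z => Set.indicator (ball c ρ) (fun z => ‖g z‖) z) c]
    congr 1
    ext w
    by_cases hw : w ∈ ball (0:ℂ) ρ
    · rw [Set.indicator_of_mem hw, Set.indicator_of_mem]
      simpa [mem_ball, dist_eq_norm] using hw
    · rw [Set.indicator_of_notMem hw, Set.indicator_of_notMem]
      simpa [mem_ball, dist_eq_norm] using hw
  -- polar coordinates
  set G : ℂ → ℝ := Set.indicator (ball (0:ℂ) ρ) (fun w => ‖g (c + w)‖) with hG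
  have hpol : ∫ w in ball (0:ℂ) ρ, ‖g (c + w)‖ = ∫ w, G w := by
    rw [hG, integral_indicator measurableSet_ball]
  have hpol2 : ∫ w, G w = ∫ p in Set.Ioo (0:ℝ) ρ ×ˢ Set.Ioo (-π) π,
      p.1 * ‖g (c + Complex.polarCoord.symm p)‖ := by
    rw [← Complex.integral_comp_polarCoord_symm G]
    rw [← integral_indicator (by exact polarCoord.open_target.measurableSet),
      ← integral_indicator ((isOpen_Ioo.prod isOpen_Ioo).measurableSet)]
    congr 1
    ext p
    by_cases hp : p ∈ Set.Ioo (0:ℝ) ρ ×ˢ Set.Ioo (-π) π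
    · obtain ⟨⟨h0, hρ'⟩, hθ⟩ := hp
      have hpt : p ∈ polarCoord.target := by
        have : polarCoord.target = Set.Ioi (0:ℝ) ×ˢ Set.Ioo (-π) π := rfl
        rw [this, Set.mem_prod]
        exact ⟨h0, hθ⟩
      rw [Set.indicator_of_mem hpt, Set.indicator_of_mem (Set.mem_prod.mpr ⟨Set.mem_Ioo.mpr ⟨h0, hρ'⟩, hθ⟩)]
      have hmem : Complex.polarCoord.symm p ∈ ball (0:ℂ) ρ := by
        rw [mem_ball, dist_eq_norm, sub_zero,
          Complex.norm_polarCoord_symm, abs_of_pos h0]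
        exact hρ'
      rw [hG, Set.indicator_of_mem hmem, smul_eq_mul]
    · rw [Set.indicator_of_notMem hp]
      by_cases hpt : p ∈ polarCoord.target
      · rw [Set.indicator_of_mem hpt]
        obtain ⟨h0, hθ⟩ := hpt
        have hρ' : ¬ (p.1 < ρ) := by
          intro hlt
          exact hp (Set.mem_prod.mpr ⟨Set.mem_Ioo.mpr ⟨h0, hlt⟩, hθ⟩)
        have hmem : Complex.polarCoord.symm p ∉ ball (0:ℂ) ρ := by
          rw [mem_ball, dist_eq_norm, sub_zero,
            Complex.norm_polarCoord_symm, abs_of_pos h0]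
          exact hρ'
        rw [hG, Set.indicator_of_notMem hmem, smul_zero]
      · rw [Set.indicator_of_notMem hpt]
  set Φ : ℝ × ℝ → ℝ := fun p => p.1 * ‖g (c + Complex.polarCoord.symm p)‖ with hΦ
  have hK : IsCompact (Set.Icc (0:ℝ) ρ ×ˢ Set.Icc (-π) π) := isCompact_Icc.prod isCompact_Icc
  have hsymm_cont : Continuous (fun p : ℝ × ℝ => c + Complex.polarCoord.symm p) := by
    have : (fun p : ℝ × ℝ => c + Complex.polarCoord.symm p)
        = fun p : ℝ × ℝ => c + p.1 * (Real.cos p.2 + Real.sin p.2 * Complex.I) := by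
      funext p; rw [Complex.polarCoord_symm_apply]
    rw [this]
    exact continuous_const.add ((Complex.continuous_ofReal.comp continuous_fst).mul
      ((Complex.continuous_ofReal.comp (Real.continuous_cos.comp continuous_snd)).add
        ((Complex.continuous_ofReal.comp (Real.continuous_sin.comp continuous_snd)).mul
          continuous_const)))
  have hmaps : Set.MapsTo (fun p : ℝ × ℝ => c + Complex.polarCoord.symm p)
      (Set.Icc (0:ℝ) ρ ×ˢ Set.Icc (-π) π) (closedBall c ρ) := by
    intro p hp
    have h1 : p.1 ∈ Set.Icc (0:ℝ) ρ := hp.1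
    simp only [mem_closedBall, dist_eq_norm, add_sub_cancel_left,
      Complex.norm_polarCoord_symm]
    rw [_root_.abs_of_nonneg h1.1]
    exact h1.2
  have hΦc : ContinuousOn Φ (Set.Icc (0:ℝ) ρ ×ˢ Set.Icc (-π) π) := by
    apply ContinuousOn.mul continuous_fst.continuousOn
    exact ((hcont.comp hsymm_cont.continuousOn hmaps).norm)
  have hΦint : IntegrableOn Φ (Set.Ioo (0:ℝ) ρ ×ˢ Set.Ioo (-π) π) := by
    apply (hΦc.integrableOn_compact hK).mono_set
    exact Set.prod_mono Set.Ioo_subset_Icc_self Set.Ioo_subset_Icc_self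
  have hΦint' : Integrable Φ
      ((volume.restrict (Set.Ioo (0:ℝ) ρ)).prod (volume.restrict (Set.Ioo (-π) π))) := by
    rw [Measure.prod_restrict]
    rw [IntegrableOn, Measure.volume_eq_prod] at hΦint
    exact hΦint
  have hfub : ∫ p in Set.Ioo (0:ℝ) ρ ×ˢ Set.Ioo (-π) π, Φ p
      = ∫ s in Set.Ioo (0:ℝ) ρ, ∫ θ in Set.Ioo (-π) π, Φ (s, θ) := by
    rw [Measure.volume_eq_prod]
    apply setIntegral_prod
    rw [IntegrableOn, ← Measure.volume_eq_prod]
    exact hΦint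
  have hcircle : ∀ s ∈ Set.Ioo (0:ℝ) ρ,
      2 * π * ‖g c‖ * s ≤ ∫ θ in Set.Ioo (-π) π, Φ (s, θ) := by
    intro s hsm
    have hcm : ∀ θ : ℝ, c + Complex.polarCoord.symm (s, θ) = circleMap c s θ := by
      intro θ
      rw [Complex.polarCoord_symm_apply]
      simp [circleMap, Complex.exp_mul_I]
    have h1 : ∫ θ in Set.Ioo (-π) π, Φ (s, θ)
        = s * ∫ θ in Set.Ioo (-π) π, ‖g (circleMap c s θ)‖ := by
      rw [← integral_const_mul]
      apply setIntegral_congr_fun measurableSet_Ioo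
      intro θ _
      simp only [hΦ, hcm]
    rw [h1]
    have hcb := circle_bound g c s hsm.1
      (hcont.mono (closedBall_subset_closedBall hsm.2.le))
      (fun z hz => hdiff z (ball_subset_ball hsm.2.le hz))
    calc 2 * π * ‖g c‖ * s = s * (2 * π * ‖g c‖) := by ring
    _ ≤ s * ∫ θ in Set.Ioo (-π) π, ‖g (circleMap c s θ)‖ :=
        mul_le_mul_of_nonneg_left hcb hsm.1.le
  have houter : ∫ s in Set.Ioo (0:ℝ) ρ, 2 * π * ‖g c‖ * s
      ≤ ∫ s in Set.Ioo (0:ℝ) ρ, ∫ θ in Set.Ioo (-π) π, Φ (s, θ) := by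
    apply setIntegral_mono_on
    · exact ((continuous_const.mul continuous_id).integrableOn_Icc (a := (0:ℝ)) (b := ρ)).mono_set
        Set.Ioo_subset_Icc_self
    · exact hΦint'.integral_prod_left
    · exact measurableSet_Ioo
    · exact hcircle
  have hval : ∫ s in Set.Ioo (0:ℝ) ρ, 2 * π * ‖g c‖ * s = π * ρ^2 * ‖g c‖ := by
    rw [← MeasureTheory.integral_Ioc_eq_integral_Ioo,
      ← intervalIntegral.integral_of_le hρ.le, intervalIntegral.integral_const_mul,
      integral_id]
    ring
  rw [htrans, hpol, hpol2, hfub, ← hval]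
  exact houter

end AuxProof

section Main
open Complex in
theorem stmt2 (f : ℂ → ℂ)
    (hf : AnalyticOn ℂ f (ball (0:ℂ) 1))
    (hA : IntegrableOn (fun z => ‖deriv f z‖ ^ 2) (ball (0:ℂ) 1)) :
    ∀ z₀ ∈ ball (0:ℂ) 1,
      ‖deriv f z₀‖ * (1 - ‖z₀‖ ^ 2) / 2 ≤
        Real.sqrt ((∫ z in ball (0:ℂ) 1, ‖deriv f z‖ ^ 2) / (4 * π)) := by
  intro z₀ hz₀
  set A := ∫ z in ball (0:ℂ) 1, ‖deriv f z‖ ^ 2 with hAdef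
  have hA0 : 0 ≤ A := setIntegral_nonneg measurableSet_ball (fun z _ => by positivity)
  have ha : ‖z₀‖ < 1 := by simpa [mem_ball, dist_eq_norm] using hz₀
  have hfn : AnalyticOnNhd ℂ f (ball (0:ℂ) 1) :=
    (isOpen_ball.analyticOn_iff_analyticOnNhd).mp hf
  have hdn : AnalyticOnNhd ℂ (deriv f) (ball (0:ℂ) 1) := hfn.deriv
  set b : ℂ := (starRingEnd ℂ) z₀ with hb
  have hbz : b * z₀ = ((Complex.normSq z₀ : ℝ) : ℂ) := by
    rw [hb, mul_comm, Complex.mul_conj]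
  have hnsq : Complex.normSq z₀ = ‖z₀‖^2 := by
    rw [Complex.sq_norm]
  set d : ℂ := 1 - b * z₀ with hd
  have hdval : d = ((1 - ‖z₀‖^2 : ℝ) : ℂ) := by
    rw [hd, hbz, hnsq]; push_cast; ring
  have hdne : d ≠ 0 := by
    rw [hdval]
    rw [Ne, Complex.ofReal_eq_zero]
    nlinarith [norm_nonneg z₀]
  set φ : ℂ → ℂ := fun w => (w + z₀) / (1 + b * w) with hφ
  set D : ℂ → ℂ := fun w => d / (1 + b * w)^2 with hD
  have hne : ∀ w : ℂ, ‖w‖ < 1 → 1 + b * w ≠ 0 := by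
    intro w hw h0
    have h1 : b * w = -1 := by linear_combination h0
    have h2 : ‖b * w‖ = 1 := by rw [h1]; simp
    have hbn : ‖b‖ = ‖z₀‖ := by rw [hb]; exact RCLike.norm_conj z₀
    rw [norm_mul, hbn] at h2
    nlinarith [norm_nonneg z₀, norm_nonneg w]
  have hkey : ∀ w : ℂ, Complex.normSq (1 + b * w) - Complex.normSq (w + z₀)
      = (1 - Complex.normSq z₀) * (1 - Complex.normSq w) := by
    intro w
    simp only [hb, Complex.normSq_apply, Complex.add_re, Complex.add_im, Complex.mul_re,
      Complex.mul_im, Complex.one_re, Complex.one_im, Complex.conj_re, Complex.conj_im]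
    ring
  have hnsqlt : ∀ w : ℂ, ‖w‖ < 1 → Complex.normSq w < 1 := by
    intro w hw
    rw [Complex.normSq_eq_norm_sq]
    nlinarith [norm_nonneg w]
  have hφmem : ∀ w : ℂ, ‖w‖ < 1 → ‖φ w‖ < 1 := by
    intro w hw
    have h2 := hnsqlt w hw
    have h2' := hnsqlt z₀ ha
    have h3 : Complex.normSq (w + z₀) < Complex.normSq (1 + b * w) := by
      nlinarith [hkey w]
    have h4 : ‖w + z₀‖ < ‖1 + b * w‖ := by
      rw [Complex.norm_def, Complex.norm_def]
      exact Real.sqrt_lt_sqrt (Complex.normSq_nonneg _) h3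
    rw [hφ]
    simp only [norm_div]
    rw [div_lt_one (lt_of_le_of_lt (norm_nonneg _) h4)]
    exact h4
  have hφd : ∀ w : ℂ, 1 + b * w ≠ 0 → HasDerivAt φ (D w) w := by
    intro w hw
    have h1 : HasDerivAt (fun u : ℂ => u + z₀) 1 w := (hasDerivAt_id w).add_const z₀
    have h2 : HasDerivAt (fun u : ℂ => 1 + b * u) b w := by
      simpa using ((hasDerivAt_id w).const_mul b).const_add 1
    have h3 := h1.div h2 hw
    refine h3.congr_deriv ?_
    rw [hD, hd]
    field_simp
    ring
  -- key inequality for each radius r < 1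
  set C := (‖deriv f z₀‖ * (1 - ‖z₀‖^2))^2 with hC
  have key : ∀ r ∈ Set.Ioo (0:ℝ) 1, π * r^2 * C ≤ A := by
    intro r hr
    set G : ℂ → ℂ := fun w => (deriv f (φ w) * D w)^2 with hG
    have hsub : closedBall (0:ℂ) r ⊆ ball (0:ℂ) 1 := closedBall_subset_ball hr.2
    have hnorm1 : ∀ w : ℂ, w ∈ closedBall (0:ℂ) r → ‖w‖ < 1 := by
      intro w hw
      have := hsub hw
      simpa [mem_ball, dist_eq_norm] using this
    have hdiffG : ∀ w ∈ closedBall (0:ℂ) r, DifferentiableAt ℂ G w := by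
      intro w hw
      have hw1 : ‖w‖ < 1 := hnorm1 w hw
      have hnew := hne w hw1
      have hφw : HasDerivAt φ (D w) w := hφd w hnew
      have hφmem' : φ w ∈ ball (0:ℂ) 1 := by
        simpa [mem_ball, dist_eq_norm] using hφmem w hw1
      have h1 : DifferentiableAt ℂ (deriv f) (φ w) := (hdn (φ w) hφmem').differentiableAt
      have h2 : DifferentiableAt ℂ (fun u => deriv f (φ u)) w :=
        h1.comp w hφw.differentiableAt
      have h3 : DifferentiableAt ℂ D w := by
        apply DifferentiableAt.div (differentiableAt_const d)
        · exact ((differentiableAt_id.const_mul b).const_add 1).pow 2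
        · exact pow_ne_zero 2 hnew
      exact (h2.mul h3).pow 2
    have hcontG : ContinuousOn G (closedBall (0:ℂ) r) :=
      fun w hw => (hdiffG w hw).continuousAt.continuousWithinAt
    have hsm := submean G 0 r hr.1 hcontG
      (fun z hz => hdiffG z (ball_subset_closedBall hz))
    have hφ0 : φ 0 = z₀ := by rw [hφ]; simp
    have hD0 : D 0 = ((1 - ‖z₀‖^2 : ℝ) : ℂ) := by
      rw [hD]; simp [hdval]
    have hG0 : ‖G 0‖ = C := by
      rw [hG, hC]
      simp only [hφ0, hD0]
      rw [norm_pow, norm_mul, Complex.norm_real, Real.norm_eq_abs,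
        _root_.abs_of_nonneg (by nlinarith [norm_nonneg z₀] : (0:ℝ) ≤ 1 - ‖z₀‖^2)]
    set L : ℂ → (ℂ →L[ℝ] ℂ) :=
      fun w => ((ContinuousLinearMap.smulRight (1 : ℂ →L[ℂ] ℂ) (D w)).restrictScalars ℝ) with hL
    have hfder : ∀ w ∈ ball (0:ℂ) r, HasFDerivWithinAt φ (L w) (ball (0:ℂ) r) w := by
      intro w hw
      have hw1 : ‖w‖ < 1 := hnorm1 w (ball_subset_closedBall hw)
      exact (((hφd w (hne w hw1)).hasFDerivAt).restrictScalars ℝ).hasFDerivWithinAt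
    have hdet : ∀ w : ℂ, (L w).det = Complex.normSq (D w) := by
      intro w
      have h1 : ((L w).toLinearMap) = Algebra.lmul ℝ ℂ (D w) := by
        apply LinearMap.ext
        intro u
        show (L w) u = D w * u
        simp [hL, mul_comm]
      show LinearMap.det ((L w).toLinearMap) = Complex.normSq (D w)
      rw [h1, ← Algebra.norm_complex_apply]
      rfl
    have hinj : Set.InjOn φ (ball (0:ℂ) r) := by
      intro w1 hw1 w2 hw2 heq
      have h1 : ‖w1‖ < 1 := hnorm1 w1 (ball_subset_closedBall hw1)
      have h2 : ‖w2‖ < 1 := hnorm1 w2 (ball_subset_closedBall hw2)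
      have hne1 := hne w1 h1
      have hne2 := hne w2 h2
      rw [hφ] at heq
      simp only at heq
      rw [div_eq_div_iff hne1 hne2] at heq
      have h5 : (w1 - w2) * d = 0 := by rw [hd]; linear_combination heq
      rcases mul_eq_zero.mp h5 with h | h
      · exact sub_eq_zero.mp h
      · exact absurd h hdne
    have himg : φ '' (ball (0:ℂ) r) ⊆ ball (0:ℂ) 1 := by
      rintro _ ⟨w, hw, rfl⟩
      have hw1 : ‖w‖ < 1 := hnorm1 w (ball_subset_closedBall hw)
      simpa [mem_ball, dist_eq_norm] using hφmem w hw1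
    have hCoV := integral_image_eq_integral_abs_det_fderiv_smul volume measurableSet_ball
      hfder hinj (fun z => ‖deriv f z‖^2)
    have hle1 : ∫ x in φ '' (ball (0:ℂ) r), ‖deriv f x‖^2 ≤ A := by
      rw [hAdef]
      apply setIntegral_mono_set hA
      · filter_upwards with x
        positivity
      · exact HasSubset.Subset.eventuallyLE himg
    have heq2 : ∫ x in ball (0:ℂ) r, |(L x).det| • ‖deriv f (φ x)‖^2
        = ∫ x in ball (0:ℂ) r, ‖G x‖ := by
      apply setIntegral_congr_fun measurableSet_ball
      intro w _
      show |(L w).det| • ‖deriv f (φ w)‖^2 = ‖G w‖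
      rw [hdet w, smul_eq_mul]
      show |Complex.normSq (D w)| * ‖deriv f (φ w)‖^2 = ‖(deriv f (φ w) * D w)^2‖
      rw [norm_pow, norm_mul, mul_pow, _root_.abs_of_nonneg (Complex.normSq_nonneg _),
        Complex.normSq_eq_norm_sq]
      ring
    calc π * r^2 * C = π * r^2 * ‖G 0‖ := by rw [hG0]
    _ ≤ ∫ x in ball (0:ℂ) r, ‖G x‖ := hsm
    _ = ∫ x in φ '' (ball (0:ℂ) r), ‖deriv f x‖^2 := by rw [hCoV, heq2]
    _ ≤ A := hle1
  -- take limit r → 1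
  have hπC : π * C ≤ A := by
    have htend : Filter.Tendsto (fun r : ℝ => π * r^2 * C)
        (nhdsWithin 1 (Set.Iio 1)) (nhds (π * 1^2 * C)) := by
      apply Filter.Tendsto.mono_left ?_ nhdsWithin_le_nhds
      exact Continuous.tendsto (by continuity) 1
    have hev : ∀ᶠ r in nhdsWithin (1:ℝ) (Set.Iio 1), π * r^2 * C ≤ A := by
      filter_upwards [Ioo_mem_nhdsLT (by norm_num : (0:ℝ) < 1)] with r hr
      exact key r hr
    have := le_of_tendsto htend hev
    simpa using this
  have hC2 : (‖deriv f z₀‖ * (1 - ‖z₀‖^2) / 2)^2 ≤ A / (4*π) := by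
    rw [div_pow, div_le_div_iff₀ (by norm_num) (by positivity)]
    rw [hC] at hπC
    nlinarith [Real.pi_pos]
  have hnn : 0 ≤ ‖deriv f z₀‖ * (1 - ‖z₀‖^2) / 2 := by
    have h1 : (0:ℝ) ≤ ‖deriv f z₀‖ * (1 - ‖z₀‖^2) :=
      mul_nonneg (norm_nonneg _) (by nlinarith [norm_nonneg z₀])
    linarith
  calc ‖deriv f z₀‖ * (1 - ‖z₀‖^2) / 2
      = Real.sqrt ((‖deriv f z₀‖ * (1 - ‖z₀‖^2) / 2)^2) := (Real.sqrt_sq hnn).symm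
  _ ≤ Real.sqrt (A / (4*π)) := Real.sqrt_le_sqrt hC2

end Main
end

section
/- Let f : 𝔻 → 𝔻 be analytic and let A_H = ∫_𝔻 |f'(z)|² · (2/(1−|f(z)|²))² dA(z) be the hyperbolic area of the image counting multiplicity, assumed finite. Then for every z₀ ∈ 𝔻, the hyperbolic-to-hyperbolic derivative norm satisfies |f'(z₀)| · (1−|z₀|²)/(1−|f(z₀)|²) ≤ (A_H/(4π))^{1/2}. -/
open MeasureTheory Metric Real ComplexConjugate

noncomputable def mob (a z : ℂ) : ℂ := (z - a) / (1 - conj a * z)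

lemma nsq (z : ℂ) : ‖z‖^2 = Complex.normSq z := by
  rw [Complex.sq_norm]

lemma mob_denom_ne {a z : ℂ} (ha : ‖a‖ < 1) (hz : ‖z‖ ≤ 1) : (1 : ℂ) - conj a * z ≠ 0 := by
  intro h
  rw [sub_eq_zero] at h
  have h2 : ‖conj a * z‖ < 1 := by
    rw [norm_mul, RCLike.norm_conj]
    nlinarith [norm_nonneg a, norm_nonneg z]
  rw [← h] at h2; simp at h2

lemma mob_id (a z : ℂ) : Complex.normSq (1 - conj a * z) - Complex.normSq (z - a)
    = (1 - Complex.normSq a) * (1 - Complex.normSq z) := by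
  simp [Complex.normSq_apply, Complex.mul_re, Complex.mul_im, Complex.sub_re, Complex.sub_im,
    Complex.conj_re, Complex.conj_im, Complex.one_re, Complex.one_im]
  ring

lemma one_sub_mob_sq {a z : ℂ} (ha : ‖a‖ < 1) (hz : ‖z‖ < 1) :
    1 - ‖mob a z‖^2 = (1 - ‖a‖^2) * (1 - ‖z‖^2) / ‖1 - conj a * z‖^2 := by
  have hd := mob_denom_ne ha hz.le
  have hd' : Complex.normSq (1 - conj a * z) ≠ 0 := by
    simpa [Complex.normSq_eq_zero] using hd
  rw [nsq, nsq, nsq, nsq, mob, Complex.normSq_div]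
  rw [eq_div_iff hd', sub_mul, div_mul_cancel₀ _ hd']
  linear_combination (mob_id a z)

lemma mob_maps {a z : ℂ} (ha : ‖a‖ < 1) (hz : ‖z‖ < 1) : ‖mob a z‖ < 1 := by
  have h := one_sub_mob_sq ha hz
  have hd : (0:ℝ) < ‖(1:ℂ) - conj a * z‖^2 :=
    pow_pos (norm_pos_iff.mpr (mob_denom_ne ha hz.le)) 2
  have n1 : 0 < 1 - ‖a‖^2 := by nlinarith [norm_nonneg a]
  have n2 : 0 < 1 - ‖z‖^2 := by nlinarith [norm_nonneg z]
  have hpos : 0 < 1 - ‖mob a z‖^2 := by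
    rw [h]; positivity
  nlinarith [norm_nonneg (mob a z)]

lemma mob_hasDerivAt {a z : ℂ} (h : (1:ℂ) - conj a * z ≠ 0) :
    HasDerivAt (mob a) ((1 - conj a * a) / (1 - conj a * z)^2) z := by
  have h1 : HasDerivAt (fun w : ℂ => w - a) 1 z := (hasDerivAt_id z).sub_const a
  have h2 : HasDerivAt (fun w : ℂ => (1:ℂ) - conj a * w) (-(conj a)) z := by
    simpa using ((hasDerivAt_id z).const_mul (conj a)).const_sub 1
  have := h1.div h2 h
  convert this using 1
  all_goals first | rfl | ring

lemma mob_mob {a z : ℂ} (ha : ‖a‖ < 1) (hz : ‖z‖ < 1) : mob (-a) (mob a z) = z := by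
  have h1 := mob_denom_ne ha hz.le
  have h3 : (1:ℂ) - conj a * a ≠ 0 := mob_denom_ne ha ha.le
  have h1' : (1:ℂ) - z * conj a ≠ 0 := by rwa [mul_comm]
  simp only [mob, map_neg]
  rw [div_eq_iff, ]
  · field_simp
    ring
  · intro h
    apply h3
    have : (1:ℂ) - -conj a * ((z - a) / (1 - conj a * z)) = ((1 - conj a * a)) / (1 - conj a * z) := by
      field_simp; ring
    rw [this] at h
    rcases div_eq_zero_iff.1 h with h' | h'
    · exact h'
    · exact absurd h' h1

lemma cs_interval {u : ℝ → ℝ} {a b : ℝ} (hab : a < b) (hu : ∀ x, 0 ≤ u x)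
    (h1 : IntervalIntegrable u volume a b)
    (h2 : IntervalIntegrable (fun x => u x ^ 2) volume a b) :
    (∫ x in a..b, u x) ^ 2 ≤ (b - a) * ∫ x in a..b, u x ^ 2 := by
  set I1 := ∫ x in a..b, u x with hI1
  set I2 := ∫ x in a..b, u x ^ 2 with hI2
  have hI1n : 0 ≤ I1 := intervalIntegral.integral_nonneg hab.le (fun x _ => hu x)
  have hI2n : 0 ≤ I2 := intervalIntegral.integral_nonneg hab.le (fun x _ => sq_nonneg _)
  have key : ∀ t : ℝ, 0 < t → I1 ≤ I2 / (2 * t) + (b - a) * t / 2 := by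
    intro t ht
    have hpt : ∀ x, u x ≤ u x ^ 2 / (2 * t) + t / 2 := by
      intro x
      have e : u x ^ 2 / (2 * t) + t / 2 = (u x ^ 2 + t ^ 2) / (2 * t) := by
        field_simp
      rw [e, le_div_iff₀ (by positivity)]
      nlinarith [sq_nonneg (u x - t)]
    have h3 : IntervalIntegrable (fun x => u x ^ 2 / (2 * t) + t / 2) volume a b :=
      (h2.div_const _).add intervalIntegrable_const
    calc I1 ≤ ∫ x in a..b, (u x ^ 2 / (2 * t) + t / 2) :=
          intervalIntegral.integral_mono_on hab.le h1 h3 (fun x _ => hpt x)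
      _ = I2 / (2 * t) + (b - a) * t / 2 := by
          rw [intervalIntegral.integral_add (h2.div_const _) intervalIntegrable_const,
            intervalIntegral.integral_div, intervalIntegral.integral_const]
          rw [smul_eq_mul]
          ring
  rcases eq_or_lt_of_le hI2n with h0 | hpos
  · have : I1 ≤ 0 := by
      by_contra hc
      push_neg at hc
      have ht : 0 < I1 / (b - a) := div_pos hc (by linarith)
      have := key (I1 / (b - a)) ht
      rw [← h0] at this
      simp only [zero_div] at this
      have e : (b - a) * (I1 / (b - a)) = I1 := by
        rw [mul_div_cancel₀ _ (by linarith : b - a ≠ 0)]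
      rw [e] at this
      linarith
    nlinarith
  · set t := Real.sqrt (I2 / (b - a)) with htdef
    have ht : 0 < t := Real.sqrt_pos.mpr (div_pos hpos (by linarith))
    have ht2 : t ^ 2 = I2 / (b - a) := Real.sq_sqrt (le_of_lt (div_pos hpos (by linarith)))
    have hkey := key t ht
    have htI : t ^ 2 * (b - a) = I2 := by
      rw [ht2, div_mul_cancel₀ _ (by linarith : b - a ≠ 0)]
    have hhalf : I2 / (2 * t) = (b - a) * t / 2 := by
      rw [← htI]; field_simp
    rw [hhalf] at hkey
    have hkey' : I1 ≤ (b - a) * t := by linarith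
    have hsq := mul_le_mul hkey' hkey' hI1n (by nlinarith : (0:ℝ) ≤ (b - a) * t)
    nlinarith [hsq, htI]

lemma circle_avg {g : ℂ → ℂ} (hg : AnalyticOnNhd ℂ g (ball (0:ℂ) 1)) {r : ℝ}
    (hr : 0 < r) (hr1 : r < 1) :
    2 * π * ‖g 0‖ ^ 2 ≤ ∫ θ in Set.Ioo (-π) π, ‖g (circleMap 0 r θ)‖ ^ 2 := by
  have hpi := Real.pi_pos
  -- Cauchy integral formula
  have hd : DifferentiableOn ℂ g (closedBall (0:ℂ) r) :=
    hg.differentiableOn.mono (closedBall_subset_ball hr1)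
  have hC := hd.circleIntegral_sub_inv_smul (c := 0) (w := 0) (mem_ball_self hr)
  rw [circleIntegral] at hC
  simp only [deriv_circleMap, sub_zero, smul_eq_mul] at hC
  have hC' : ∫ θ in (0:ℝ)..2*π, Complex.I * g (circleMap 0 r θ) =
      Complex.I * (2 * π * g 0) := by
    have e : ∀ θ : ℝ, circleMap 0 r θ * Complex.I * ((circleMap 0 r θ)⁻¹ * g (circleMap 0 r θ))
        = Complex.I * g (circleMap 0 r θ) := by
      intro θ
      have hne : circleMap 0 r θ ≠ 0 := circleMap_ne_center hr.ne'
      field_simp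
    calc ∫ θ in (0:ℝ)..2*π, Complex.I * g (circleMap 0 r θ)
        = ∫ θ in (0:ℝ)..2*π, circleMap 0 r θ * Complex.I *
            ((circleMap 0 r θ)⁻¹ * g (circleMap 0 r θ)) :=
          intervalIntegral.integral_congr (fun θ _ => (e θ).symm)
      _ = 2 * (π:ℂ) * Complex.I * g 0 := hC
      _ = Complex.I * (2 * π * g 0) := by ring
  rw [intervalIntegral.integral_const_mul] at hC'
  have hI : ∫ θ in (0:ℝ)..2*π, g (circleMap 0 r θ) = 2 * π * g 0 :=
    mul_left_cancel₀ Complex.I_ne_zero hC'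
  -- periodicity: shift to (-π, π)
  have hper : Function.Periodic (fun θ => g (circleMap 0 r θ)) (2*π) :=
    (periodic_circleMap 0 r).comp g
  have hshift := hper.intervalIntegral_add_eq (-π) 0
  simp only [zero_add] at hshift
  have hbound : -π + 2*π = π := by ring
  rw [hbound] at hshift
  have hI2 : ∫ θ in (-π)..π, g (circleMap 0 r θ) = 2 * π * g 0 := by
    rw [hshift]; exact hI
  -- continuity
  have hmem : ∀ θ : ℝ, circleMap 0 r θ ∈ ball (0:ℂ) 1 := by
    intro θ
    rw [mem_ball_zero_iff]
    have : ‖circleMap 0 r θ‖ = r := by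
      simpa [abs_of_pos hr] using abs_circleMap_zero r θ
    rw [this]; exact hr1
  have hcont : ContinuousOn (fun θ => g (circleMap 0 r θ)) (Set.uIcc (-π) π) := by
    apply hg.continuousOn.comp (continuous_circleMap 0 r).continuousOn
    intro θ _
    exact hmem θ
  set u : ℝ → ℝ := fun θ => ‖g (circleMap 0 r θ)‖ with hu
  have hucont : ContinuousOn u (Set.uIcc (-π) π) := hcont.norm
  have h1 : IntervalIntegrable u volume (-π) π := hucont.intervalIntegrable
  have h2 : IntervalIntegrable (fun θ => u θ ^ 2) volume (-π) π :=
    (hucont.pow 2).intervalIntegrable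
  -- norm bound
  have hnorm : 2 * π * ‖g 0‖ ≤ ∫ θ in (-π)..π, u θ := by
    have := intervalIntegral.norm_integral_le_integral_norm
      (f := fun θ => g (circleMap 0 r θ)) (a := -π) (b := π) (μ := volume) (by linarith)
    rw [hI2] at this
    calc 2 * π * ‖g 0‖ = ‖(2 * (π:ℂ) * g 0)‖ := by
          simp [norm_mul, Complex.norm_real, abs_of_nonneg Real.pi_pos.le]
      _ ≤ ∫ θ in (-π)..π, u θ := this
  -- Cauchy-Schwarz
  have hcs := cs_interval (a := -π) (b := π) (by linarith)
    (fun x => norm_nonneg _) h1 h2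
  have hpos : 0 ≤ 2 * π * ‖g 0‖ := by positivity
  have hfinal : 2 * π * ‖g 0‖ ^ 2 ≤ ∫ θ in (-π)..π, u θ ^ 2 := by
    have hsq : (2 * π * ‖g 0‖)^2 ≤ (∫ θ in (-π)..π, u θ)^2 := by
      apply sq_le_sq' _ hnorm
      nlinarith [intervalIntegral.integral_nonneg (μ := volume)
        (f := u) (by linarith : -π ≤ π)
        (fun x _ => norm_nonneg (g (circleMap 0 r x)))]
    have := hsq.trans hcs
    have h2pi : π - (-π) = 2 * π := by ring
    rw [h2pi] at this
    nlinarith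
  calc 2 * π * ‖g 0‖ ^ 2 ≤ ∫ θ in (-π)..π, u θ ^ 2 := hfinal
    _ = ∫ θ in Set.Ioo (-π) π, ‖g (circleMap 0 r θ)‖ ^ 2 := by
        rw [intervalIntegral.integral_of_le (by linarith), integral_Ioc_eq_integral_Ioo]

lemma mv {g : ℂ → ℂ} (hg : AnalyticOnNhd ℂ g (ball (0:ℂ) 1))
    (hint : IntegrableOn (fun z => ‖g z‖ ^ 2) (ball (0:ℂ) 1)) :
    π * ‖g 0‖ ^ 2 ≤ ∫ z in ball (0:ℂ) 1, ‖g z‖ ^ 2 := by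
  have hpi := Real.pi_pos
  set c := ‖g 0‖ ^ 2 with hc
  set Itot := ∫ z in ball (0:ℂ) 1, ‖g z‖ ^ 2 with hItot
  have step1 : ∀ s ∈ Set.Ioo (0:ℝ) 1, π * s ^ 2 * c ≤ Itot := by
    rintro s ⟨hs0, hs1⟩
    set q : ℂ → ℝ := (ball (0:ℂ) s).indicator (fun z => ‖g z‖ ^ 2) with hq
    have hsub : ball (0:ℂ) s ⊆ ball 0 1 := ball_subset_ball hs1.le
    have hqint : Integrable q := (hint.mono_set hsub).integrable_indicator measurableSet_ball
    have hql : ∫ z, q z = ∫ z in ball (0:ℂ) s, ‖g z‖ ^ 2 := integral_indicator measurableSet_ball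
    have hmono : ∫ z in ball (0:ℂ) s, ‖g z‖ ^ 2 ≤ Itot := by
      apply setIntegral_mono_set hint
      · filter_upwards with z using sq_nonneg _
      · exact Filter.Eventually.of_forall hsub
    -- polar coordinates
    have hpol := Complex.integral_comp_polarCoord_symm q
    rw [show polarCoord.target = Set.Ioi (0:ℝ) ×ˢ Set.Ioo (-π) π from rfl] at hpol
    set symm' : ℝ × ℝ → ℂ := fun p => Complex.polarCoord.symm p with hsymm'
    set Φ : ℝ × ℝ → ℝ := fun p => p.1 • q (symm' p) with hΦ
    set W : ℝ × ℝ → ℝ := fun p => p.1 * ‖g (symm' p)‖ ^ 2 with hW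
    set T : Set (ℝ × ℝ) := Set.Ioo 0 s ×ˢ Set.Ioo (-π) π with hT
    have hTmeas : MeasurableSet T := measurableSet_Ioo.prod measurableSet_Ioo
    have hBigmeas : MeasurableSet (Set.Ioi (0:ℝ) ×ˢ Set.Ioo (-π) π) :=
      measurableSet_Ioi.prod measurableSet_Ioo
    have habs : ∀ p : ℝ × ℝ, 0 < p.1 → ‖symm' p‖ = p.1 := by
      intro p hp
      simp only [hsymm']
      rw [Complex.norm_polarCoord_symm, abs_of_pos hp]
    -- restrict to T
    have hTsub : T ⊆ Set.Ioi (0:ℝ) ×ˢ Set.Ioo (-π) π := by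
      rw [hT]
      exact Set.prod_mono Set.Ioo_subset_Ioi_self (subset_refl _)
    have claim1 : ∫ p in Set.Ioi (0:ℝ) ×ˢ Set.Ioo (-π) π, Φ p = ∫ p in T, Φ p := by
      calc ∫ p in Set.Ioi (0:ℝ) ×ˢ Set.Ioo (-π) π, Φ p
          = ∫ p in Set.Ioi (0:ℝ) ×ˢ Set.Ioo (-π) π, T.indicator Φ p := by
            apply setIntegral_congr_fun hBigmeas
            intro p hp
            by_cases hpT : p ∈ T
            · rw [Set.indicator_of_mem hpT]
            · rw [Set.indicator_of_notMem hpT]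
              have hp1 : 0 < p.1 := hp.1
              have hps : s ≤ p.1 := by
                by_contra hlt
                push_neg at hlt
                exact hpT ⟨⟨hp1, hlt⟩, hp.2⟩
              have hnm : symm' p ∉ ball (0:ℂ) s := by
                rw [mem_ball_zero_iff, habs p hp1]
                linarith
              simp only [hΦ, hq, Set.indicator_of_notMem hnm, smul_zero]
        _ = ∫ p in (Set.Ioi (0:ℝ) ×ˢ Set.Ioo (-π) π) ∩ T, Φ p := setIntegral_indicator hTmeas
        _ = ∫ p in T, Φ p := by rw [Set.inter_eq_self_of_subset_right hTsub]
    have claim2 : ∫ p in T, Φ p = ∫ p in T, W p := by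
      apply setIntegral_congr_fun hTmeas
      intro p hp
      have : symm' p ∈ ball (0:ℂ) s := by
        rw [mem_ball_zero_iff, habs p hp.1.1]
        exact hp.1.2
      simp only [hΦ, hW, hq, Set.indicator_of_mem this, smul_eq_mul]
    -- continuity / boundedness of W on T
    have hsymmc : Continuous symm' := by
      have : symm' = fun p : ℝ × ℝ => (p.1 : ℂ) * (Real.cos p.2 + Real.sin p.2 * Complex.I) := by
        funext p; simp only [hsymm', Complex.polarCoord_symm_apply]
      rw [this]
      exact (Complex.continuous_ofReal.comp continuous_fst).mul
        ((Complex.continuous_ofReal.comp (Real.continuous_cos.comp continuous_snd)).add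
          ((Complex.continuous_ofReal.comp (Real.continuous_sin.comp continuous_snd)).mul
            continuous_const))
    have hmapsT : ∀ p ∈ T, symm' p ∈ ball (0:ℂ) 1 := by
      intro p hp
      rw [mem_ball_zero_iff, habs p hp.1.1]
      linarith [hp.1.2]
    obtain ⟨M, hM⟩ : ∃ M, ∀ z ∈ closedBall (0:ℂ) s, ‖g z‖ ≤ M := by
      have hcomp : IsCompact (closedBall (0:ℂ) s) := isCompact_closedBall _ _
      have hgc : ContinuousOn g (closedBall (0:ℂ) s) :=
        hg.continuousOn.mono (closedBall_subset_ball hs1)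
      exact hcomp.exists_bound_of_continuousOn hgc
    have hWcont : ContinuousOn W T := by
      apply ContinuousOn.mul continuous_fst.continuousOn
      exact ((hg.continuousOn.comp hsymmc.continuousOn hmapsT).norm.pow 2)
    have hWint : IntegrableOn W T := by
      have hTfin : volume T ≠ ⊤ := by
        rw [hT, Measure.volume_eq_prod, Measure.prod_prod, Real.volume_Ioo, Real.volume_Ioo]
        exact ENNReal.mul_ne_top ENNReal.ofReal_ne_top ENNReal.ofReal_ne_top
      have hbdd : ∀ᵐ p ∂(volume.restrict T), ‖W p‖ ≤ s * M ^ 2 := by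
        filter_upwards [ae_restrict_mem hTmeas] with p hp
        have h1 : ‖g (symm' p)‖ ≤ M := hM _ (by
          rw [mem_closedBall_zero_iff, habs p hp.1.1]
          exact hp.1.2.le)
        have h0 : (0:ℝ) ≤ ‖g (symm' p)‖ := norm_nonneg _
        simp only [hW, Real.norm_eq_abs]
        rw [abs_of_nonneg (mul_nonneg hp.1.1.le (sq_nonneg _))]
        have hps : p.1 ≤ s := hp.1.2.le
        have hg2 : ‖g (symm' p)‖ ^ 2 ≤ M ^ 2 := by nlinarith
        exact mul_le_mul hps hg2 (sq_nonneg _) hs0.le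
      exact ⟨hWcont.aestronglyMeasurable hTmeas,
        HasFiniteIntegral.restrict_of_bounded (s * M ^ 2) hTfin.lt_top hbdd⟩
    -- Fubini
    have hres : (volume : Measure (ℝ × ℝ)).restrict T =
        (volume.restrict (Set.Ioo (0:ℝ) s)).prod (volume.restrict (Set.Ioo (-π) π)) := by
      rw [Measure.prod_restrict, ← Measure.volume_eq_prod, hT]
    have hWint' : Integrable W
        ((volume.restrict (Set.Ioo (0:ℝ) s)).prod (volume.restrict (Set.Ioo (-π) π))) := by
      rw [← hres]; exact hWint
    have hfub : ∫ p in T, W p =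
        ∫ r in Set.Ioo (0:ℝ) s, ∫ θ in Set.Ioo (-π) π, W (r, θ) := by
      rw [hres]
      exact integral_prod W hWint'
    -- inner bound
    have hinner : ∀ r ∈ Set.Ioo (0:ℝ) s, 2 * π * c * r ≤ ∫ θ in Set.Ioo (-π) π, W (r, θ) := by
      rintro r ⟨hr0, hrs⟩
      have hcirc : ∀ θ : ℝ, symm' (r, θ) = circleMap 0 r θ := by
        intro θ
        simp only [hsymm', Complex.polarCoord_symm_apply]
        simp [circleMap, Complex.exp_mul_I, Complex.ofReal_cos, Complex.ofReal_sin]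
      have : (fun θ => W (r, θ)) = fun θ => r * ‖g (circleMap 0 r θ)‖ ^ 2 := by
        funext θ; simp only [hW, hcirc θ]
      rw [this, integral_const_mul]
      have := circle_avg hg hr0 (hrs.trans hs1)
      calc 2 * π * c * r = r * (2 * π * c) := by ring
        _ ≤ r * ∫ θ in Set.Ioo (-π) π, ‖g (circleMap 0 r θ)‖ ^ 2 :=
            mul_le_mul_of_nonneg_left this hr0.le
    -- outer bound
    have houter_int : Integrable (fun r => ∫ θ in Set.Ioo (-π) π, W (r, θ))
        (volume.restrict (Set.Ioo (0:ℝ) s)) := hWint'.integral_prod_left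
    have hlin_int : IntegrableOn (fun r : ℝ => 2 * π * c * r) (Set.Ioo (0:ℝ) s) := by
      have : IntervalIntegrable (fun r : ℝ => 2 * π * c * r) volume 0 s :=
        (continuous_const.mul continuous_id).intervalIntegrable 0 s
      rw [intervalIntegrable_iff_integrableOn_Ioc_of_le hs0.le] at this
      exact this.mono_set Set.Ioo_subset_Ioc_self
    have houter : ∫ r in Set.Ioo (0:ℝ) s, (2 * π * c * r) ≤
        ∫ r in Set.Ioo (0:ℝ) s, ∫ θ in Set.Ioo (-π) π, W (r, θ) := by
      apply setIntegral_mono_on hlin_int houter_int measurableSet_Ioo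
      exact hinner
    have hval : ∫ r in Set.Ioo (0:ℝ) s, (2 * π * c * r) = π * s ^ 2 * c := by
      rw [← integral_Ioc_eq_integral_Ioo, ← intervalIntegral.integral_of_le hs0.le]
      rw [intervalIntegral.integral_const_mul, integral_id]
      ring
    calc π * s ^ 2 * c = ∫ r in Set.Ioo (0:ℝ) s, (2 * π * c * r) := hval.symm
      _ ≤ ∫ r in Set.Ioo (0:ℝ) s, ∫ θ in Set.Ioo (-π) π, W (r, θ) := houter
      _ = ∫ p in T, W p := hfub.symm
      _ = ∫ p in T, Φ p := claim2.symm
      _ = ∫ p in Set.Ioi (0:ℝ) ×ˢ Set.Ioo (-π) π, Φ p := claim1.symm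
      _ = ∫ z, q z := hpol
      _ = ∫ z in ball (0:ℂ) s, ‖g z‖ ^ 2 := hql
      _ ≤ Itot := hmono
  -- limit s → 1
  have htends : Filter.Tendsto (fun s : ℝ => π * s ^ 2 * c) (nhdsWithin 1 (Set.Iio 1))
      (nhds (π * 1 ^ 2 * c)) := by
    apply Filter.Tendsto.mono_left _ nhdsWithin_le_nhds
    exact (Continuous.tendsto (by continuity) 1)
  have hev : ∀ᶠ s in nhdsWithin (1:ℝ) (Set.Iio 1), π * s ^ 2 * c ≤ Itot := by
    filter_upwards [Ioo_mem_nhdsLT zero_lt_one] with s hs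
    exact step1 s hs
  have := le_of_tendsto htends hev
  simpa using this

lemma det_clm (c : ℂ) :
    (((1 : ℂ →L[ℂ] ℂ).smulRight c).restrictScalars ℝ).det = Complex.normSq c := by
  rw [ContinuousLinearMap.det]
  have : ((((1 : ℂ →L[ℂ] ℂ).smulRight c).restrictScalars ℝ : ℂ →L[ℝ] ℂ) : ℂ →ₗ[ℝ] ℂ)
      = (((1 : ℂ →L[ℂ] ℂ).smulRight c : ℂ →ₗ[ℂ] ℂ)).restrictScalars ℝ := rfl
  rw [this, ← LinearMap.det_toMatrix Complex.basisOneI, Matrix.det_fin_two]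
  simp [Complex.normSq_apply, LinearMap.toMatrix_apply]

lemma one_sub_conj_mul_self {a : ℂ} (ha : ‖a‖ < 1) :
    (1 : ℂ) - conj a * a = ((1 - ‖a‖^2 : ℝ) : ℂ) := by
  have : conj a * a = ((Complex.normSq a : ℝ) : ℂ) := by
    rw [mul_comm, Complex.mul_conj]
  rw [this, ← nsq]
  push_cast
  ring

lemma norm_one_sub_conj_mul_self {a : ℂ} (ha : ‖a‖ < 1) :
    ‖(1 : ℂ) - conj a * a‖ = 1 - ‖a‖^2 := by
  rw [one_sub_conj_mul_self ha, Complex.norm_real, Real.norm_eq_abs, abs_of_nonneg]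
  nlinarith [norm_nonneg a]

lemma norm_mob_deriv {a z : ℂ} (ha : ‖a‖ < 1) :
    ‖(1 - conj a * a) / (1 - conj a * z)^2‖ = (1 - ‖a‖^2) / ‖1 - conj a * z‖^2 := by
  rw [norm_div, norm_pow, norm_one_sub_conj_mul_self ha]

lemma norm_mob_deriv_le {a u : ℂ} (ha : ‖a‖ < 1) (hu : ‖u‖ < 1) :
    ‖(1 - conj a * a) / (1 - conj a * u)^2‖ ≤ 1 / (1 - ‖u‖^2) := by
  rw [norm_mob_deriv ha]
  have hden : (0:ℝ) < ‖(1:ℂ) - conj a * u‖^2 :=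
    pow_pos (norm_pos_iff.mpr (mob_denom_ne ha hu.le)) 2
  have hu2 : (0:ℝ) < 1 - ‖u‖^2 := by nlinarith [norm_nonneg u]
  rw [div_le_div_iff₀ hden hu2]
  have hid := mob_id a u
  have h1 : Complex.normSq (u - a) ≥ 0 := Complex.normSq_nonneg _
  have e1 : ‖(1:ℂ) - conj a * u‖^2 = Complex.normSq (1 - conj a * u) := nsq _
  have e2 : ‖a‖^2 = Complex.normSq a := nsq a
  have e3 : ‖u‖^2 = Complex.normSq u := nsq u
  rw [e1, e2, e3]
  nlinarith

theorem stmt3 (f : ℂ → ℂ)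
    (hf : AnalyticOn ℂ f (ball (0:ℂ) 1))
    (hmaps : Set.MapsTo f (ball (0:ℂ) 1) (ball (0:ℂ) 1))
    (hA : IntegrableOn
      (fun z => ‖deriv f z‖ ^ 2 * (2 / (1 - ‖f z‖ ^ 2)) ^ 2) (ball (0:ℂ) 1)) :
    ∀ z₀ ∈ ball (0:ℂ) 1,
      ‖deriv f z₀‖ * (1 - ‖z₀‖ ^ 2) / (1 - ‖f z₀‖ ^ 2) ≤
        Real.sqrt
          ((∫ z in ball (0:ℂ) 1, ‖deriv f z‖ ^ 2 * (2 / (1 - ‖f z‖ ^ 2)) ^ 2)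
            / (4 * π)) := by
  intro z₀ hz₀mem
  have hpi := Real.pi_pos
  have hz0 : ‖z₀‖ < 1 := mem_ball_zero_iff.1 hz₀mem
  set w₀ := f z₀ with hw₀def
  have hw0 : ‖w₀‖ < 1 := mem_ball_zero_iff.1 (hmaps hz₀mem)
  have hnz0 : ‖(-z₀ : ℂ)‖ < 1 := by rwa [norm_neg]
  set h : ℂ → ℝ := fun z => ‖deriv f z‖ ^ 2 * (2 / (1 - ‖f z‖ ^ 2)) ^ 2 with hh
  set A := ∫ z in ball (0:ℂ) 1, h z with hAdef
  set φ : ℂ → ℂ := mob (-z₀) with hφdef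
  set dφ : ℂ → ℂ := fun z => (1 - conj (-z₀) * (-z₀)) / (1 - conj (-z₀) * z)^2 with hdφdef
  set F : ℂ → ℂ := fun z => mob w₀ (f (φ z)) with hFdef
  -- derivative of φ
  have hφd : ∀ z ∈ ball (0:ℂ) 1, HasDerivAt φ (dφ z) z := by
    intro z hz
    exact mob_hasDerivAt (mob_denom_ne hnz0 (mem_ball_zero_iff.1 hz).le)
  -- image and injectivity
  have hφmaps : ∀ z ∈ ball (0:ℂ) 1, φ z ∈ ball (0:ℂ) 1 := by
    intro z hz
    exact mem_ball_zero_iff.2 (mob_maps hnz0 (mem_ball_zero_iff.1 hz))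
  have himg : φ '' ball (0:ℂ) 1 = ball (0:ℂ) 1 := by
    apply Set.Subset.antisymm
    · rintro _ ⟨z, hz, rfl⟩
      exact hφmaps z hz
    · intro w hw
      have hw' : ‖w‖ < 1 := mem_ball_zero_iff.1 hw
      refine ⟨mob z₀ w, mem_ball_zero_iff.2 (mob_maps hz0 hw'), ?_⟩
      rw [hφdef]
      exact mob_mob hz0 hw'
  have hinj : Set.InjOn φ (ball (0:ℂ) 1) := by
    intro x hx y hy hxy
    have ex : mob (-(-z₀)) (φ x) = x := mob_mob hnz0 (mem_ball_zero_iff.1 hx)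
    have ey : mob (-(-z₀)) (φ y) = y := mob_mob hnz0 (mem_ball_zero_iff.1 hy)
    calc x = mob (-(-z₀)) (φ x) := ex.symm
      _ = mob (-(-z₀)) (φ y) := by rw [hxy]
      _ = y := ey
  -- fderiv data
  set f' : ℂ → (ℂ →L[ℝ] ℂ) := fun z => ((1 : ℂ →L[ℂ] ℂ).smulRight (dφ z)).restrictScalars ℝ
    with hf'def
  have hf' : ∀ z ∈ ball (0:ℂ) 1, HasFDerivWithinAt φ (f' z) (ball (0:ℂ) 1) z := by
    intro z hz
    exact (((hφd z hz).hasFDerivAt).restrictScalars ℝ).hasFDerivWithinAt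
  have hdet : ∀ z, |(f' z).det| = ‖dφ z‖ ^ 2 := by
    intro z
    rw [hf'def]
    simp only []
    rw [det_clm, abs_of_nonneg (Complex.normSq_nonneg _)]
    exact (nsq _).symm
  -- change of variables
  have cov : A = ∫ z in ball (0:ℂ) 1, |(f' z).det| • h (φ z) := by
    rw [hAdef]
    calc ∫ z in ball (0:ℂ) 1, h z = ∫ z in φ '' ball (0:ℂ) 1, h z := by rw [himg]
      _ = ∫ z in ball (0:ℂ) 1, |(f' z).det| • h (φ z) :=
        integral_image_eq_integral_abs_det_fderiv_smul volume measurableSet_ball hf' hinj h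
  have hInt2 : IntegrableOn (fun z => |(f' z).det| • h (φ z)) (ball (0:ℂ) 1) := by
    rw [← integrableOn_image_iff_integrableOn_abs_det_fderiv_smul volume
      measurableSet_ball hf' hinj h]
    rw [himg]
    exact hA
  -- analyticity
  have hmob_an : ∀ a : ℂ, ‖a‖ < 1 → AnalyticOnNhd ℂ (mob a) (ball (0:ℂ) 1) := by
    intro a ha
    apply AnalyticOnNhd.div
    · exact analyticOnNhd_id.sub analyticOnNhd_const
    · exact analyticOnNhd_const.sub (analyticOnNhd_const.mul analyticOnNhd_id)
    · intro z hz
      exact mob_denom_ne ha (mem_ball_zero_iff.1 hz).le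
  have hfN : AnalyticOnNhd ℂ f (ball (0:ℂ) 1) := (isOpen_ball.analyticOn_iff_analyticOnNhd).1 hf
  have hFN : AnalyticOnNhd ℂ F (ball (0:ℂ) 1) := by
    have h1 : AnalyticOnNhd ℂ (f ∘ φ) (ball (0:ℂ) 1) :=
      hfN.comp (hmob_an _ hnz0) hφmaps
    have h2 : AnalyticOnNhd ℂ (mob w₀ ∘ (f ∘ φ)) (ball (0:ℂ) 1) :=
      (hmob_an _ hw0).comp h1 (fun z hz => hmaps (hφmaps z hz))
    exact h2
  set G : ℂ → ℂ := deriv F with hGdef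
  have hGN : AnalyticOnNhd ℂ G (ball (0:ℂ) 1) := hFN.deriv
  -- derivative of F at z
  have hFderiv : ∀ z ∈ ball (0:ℂ) 1,
      G z = (1 - conj w₀ * w₀) / (1 - conj w₀ * f (φ z))^2 * (deriv f (φ z) * dφ z) := by
    intro z hz
    have hw : φ z ∈ ball (0:ℂ) 1 := hφmaps z hz
    have hu : ‖f (φ z)‖ < 1 := mem_ball_zero_iff.1 (hmaps hw)
    have hfd : HasDerivAt f (deriv f (φ z)) (φ z) :=
      (hfN.differentiableOn.differentiableAt (isOpen_ball.mem_nhds hw)).hasDerivAt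
    have hψd : HasDerivAt (mob w₀) ((1 - conj w₀ * w₀) / (1 - conj w₀ * f (φ z))^2) (f (φ z)) :=
      mob_hasDerivAt (mob_denom_ne hw0 hu.le)
    have hcomp1 : HasDerivAt (fun z => f (φ z)) (deriv f (φ z) * dφ z) z :=
      HasDerivAt.comp z hfd (hφd z hz)
    have hcomp2 : HasDerivAt F
        ((1 - conj w₀ * w₀) / (1 - conj w₀ * f (φ z))^2 * (deriv f (φ z) * dφ z)) z :=
      HasDerivAt.comp (h₂ := mob w₀) z hψd hcomp1
    exact hcomp2.deriv
  -- pointwise bound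
  have key : ∀ z ∈ ball (0:ℂ) 1, 4 * ‖G z‖ ^ 2 ≤ |(f' z).det| • h (φ z) := by
    intro z hz
    have hw : φ z ∈ ball (0:ℂ) 1 := hφmaps z hz
    have hu : ‖f (φ z)‖ < 1 := mem_ball_zero_iff.1 (hmaps hw)
    have hu2 : (0:ℝ) < 1 - ‖f (φ z)‖^2 := by nlinarith [norm_nonneg (f (φ z))]
    rw [hFderiv z hz, hdet z, smul_eq_mul, hh]
    rw [norm_mul, norm_mul]
    have hψle := norm_mob_deriv_le hw0 hu
    set X := ‖(1 - conj w₀ * w₀) / (1 - conj w₀ * f (φ z))^2‖ with hX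
    set Y := ‖deriv f (φ z)‖ with hY
    set Z := ‖dφ z‖ with hZ
    have hXn : 0 ≤ X := norm_nonneg _
    have hYn : 0 ≤ Y := norm_nonneg _
    have hZn : 0 ≤ Z := norm_nonneg _
    have hB : (0:ℝ) < 1 / (1 - ‖f (φ z)‖^2) := by positivity
    have hX2 : X^2 ≤ (1 / (1 - ‖f (φ z)‖^2))^2 := by nlinarith
    have e : Z ^ 2 * (Y ^ 2 * (2 / (1 - ‖f (φ z)‖ ^ 2)) ^ 2)
        = 4 * ((1 / (1 - ‖f (φ z)‖^2))^2 * Y^2 * Z^2) := by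
      field_simp
      ring
    calc 4 * (X * (Y * Z)) ^ 2 = 4 * (X^2 * Y^2 * Z^2) := by ring
      _ ≤ 4 * ((1 / (1 - ‖f (φ z)‖^2))^2 * Y^2 * Z^2) := by nlinarith [sq_nonneg (Y*Z)]
      _ = Z ^ 2 * (Y ^ 2 * (2 / (1 - ‖f (φ z)‖ ^ 2)) ^ 2) := e.symm
  -- integrability of ‖G‖²
  have hGmeas : AEStronglyMeasurable (fun z => ‖G z‖^2) (volume.restrict (ball (0:ℂ) 1)) :=
    (hGN.continuousOn.norm.pow 2).aestronglyMeasurable measurableSet_ball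
  have hGint : IntegrableOn (fun z => ‖G z‖^2) (ball (0:ℂ) 1) := by
    apply Integrable.mono' (hInt2.const_mul (1/4 : ℝ)) hGmeas
    filter_upwards [ae_restrict_mem measurableSet_ball] with z hz
    have hk := key z hz
    rw [Real.norm_eq_abs, abs_of_nonneg (sq_nonneg _)]
    linarith
  -- mean value
  have hmv : π * ‖G 0‖^2 ≤ ∫ z in ball (0:ℂ) 1, ‖G z‖^2 := mv hGN hGint
  -- integral comparison
  have hcomp : ∫ z in ball (0:ℂ) 1, ‖G z‖^2 ≤ A / 4 := by
    have h4 : ∫ z in ball (0:ℂ) 1, ‖G z‖^2 ≤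
        ∫ z in ball (0:ℂ) 1, (1/4 : ℝ) * (|(f' z).det| • h (φ z)) := by
      apply setIntegral_mono_on hGint (hInt2.const_mul (1/4 : ℝ)) measurableSet_ball
      intro z hz
      have := key z hz
      linarith
    rw [integral_const_mul] at h4
    rw [← cov] at h4
    linarith
  -- value of G at 0
  have hG0 : ‖G 0‖ = ‖deriv f z₀‖ * (1 - ‖z₀‖ ^ 2) / (1 - ‖f z₀‖ ^ 2) := by
    have h0mem : (0:ℂ) ∈ ball (0:ℂ) 1 := mem_ball_self one_pos
    have hφ0 : φ 0 = z₀ := by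
      rw [hφdef]
      simp [mob]
    rw [hFderiv 0 h0mem, hφ0]
    rw [norm_mul, norm_mul]
    have e1 : ‖(1 - conj w₀ * w₀) / (1 - conj w₀ * f z₀)^2‖ = 1 / (1 - ‖w₀‖^2) := by
      rw [← hw₀def, norm_mob_deriv hw0, norm_one_sub_conj_mul_self hw0]
      have hpos : (0:ℝ) < 1 - ‖w₀‖^2 := by nlinarith [norm_nonneg w₀]
      rw [div_eq_div_iff (ne_of_gt (pow_pos hpos 2)) (ne_of_gt hpos)]
      ring
    have e2 : ‖dφ 0‖ = 1 - ‖z₀‖^2 := by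
      rw [hdφdef]
      simp only [mul_zero, sub_zero, one_pow, div_one]
      have : ‖(-z₀ : ℂ)‖^2 = ‖z₀‖^2 := by rw [norm_neg]
      rw [norm_one_sub_conj_mul_self hnz0, this]
    rw [e1, e2, ← hw₀def]
    ring
  -- conclude
  rw [← hG0]
  apply Real.le_sqrt_of_sq_le
  have hA4 : π * ‖G 0‖^2 ≤ A / 4 := le_trans hmv hcomp
  rw [le_div_iff₀ (by positivity : (0:ℝ) < 4 * π)]
  nlinarith [hA4]
end

section
/- For each 0 < ε < 1, the analytic map f : 𝔻 → 𝔻, f(z) = εz, has hyperbolic-to-hyperbolic derivative norm ε at 0, and the hyperbolic area of its image 𝔻_ε = {z : |z| < ε} equals 4πε²/(1−ε²). In particular, the ratio of the squared derivative norm at 0 to the image's hyperbolic area tends to 1/(4π) as ε → 0, so the constant 1/(4π) in the inequality ‖f'(0)‖²_{H→H} ≤ A_H(f(𝔻))/(4π) is best possible. -/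
open MeasureTheory Metric Real Filter

lemma interval_part (ε : ℝ) (hε0 : 0 < ε) (hε1 : ε < 1) :
    ∫ y in (0:ℝ)..ε, y * (2 / (1 - y ^ 2)) ^ 2 = 2 / (1 - ε ^ 2) - 2 := by
  have key : ∀ y ∈ Set.uIcc (0:ℝ) ε, HasDerivAt (fun r : ℝ => 2 / (1 - r ^ 2))
      (y * (2 / (1 - y ^ 2)) ^ 2) y := by
    intro y hy
    rw [Set.uIcc_of_le hε0.le] at hy
    have hne : 1 - y ^ 2 ≠ 0 := by nlinarith [hy.1, hy.2]
    have h1 : HasDerivAt (fun r : ℝ => 1 - r ^ 2) (-(2 * y)) y := by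
      simpa using ((hasDerivAt_pow 2 y).const_sub 1)
    have h2 := ((hasDerivAt_const y (2:ℝ)).div h1 hne)
    refine h2.congr_deriv ?_
    field_simp
    ring
  have hcont : IntervalIntegrable (fun y : ℝ => y * (2 / (1 - y ^ 2)) ^ 2) volume 0 ε := by
    apply ContinuousOn.intervalIntegrable
    intro y hy
    rw [Set.uIcc_of_le hε0.le] at hy
    have hne : 1 - y ^ 2 ≠ 0 := by nlinarith [hy.1, hy.2]
    exact (continuousAt_id.mul (((continuousAt_const.div
      ((continuousAt_const.sub (continuousAt_id.pow 2))) hne)).pow 2)).continuousWithinAt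
  have := intervalIntegral.integral_eq_sub_of_hasDerivAt key hcont
  rw [this]
  norm_num

theorem stmt5 :
    (∀ ε : ℝ, 0 < ε → ε < 1 →
      (let f : ℂ → ℂ := fun z => (ε : ℂ) * z
       ‖deriv f 0‖ * (1 - ‖(0:ℂ)‖ ^ 2) / (1 - ‖f 0‖ ^ 2) = ε) ∧
      (∫ z in ball (0:ℂ) ε, (2 / (1 - ‖z‖ ^ 2)) ^ 2) =
        4 * π * ε ^ 2 / (1 - ε ^ 2)) ∧
    Tendsto (fun ε : ℝ => ε ^ 2 / (4 * π * ε ^ 2 / (1 - ε ^ 2)))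
      (nhdsWithin 0 (Set.Ioi 0)) (nhds (1 / (4 * π))) := by
  constructor
  · intro ε hε0 hε1
    constructor
    · have hd : HasDerivAt (fun z : ℂ => (ε:ℂ) * z) (ε:ℂ) 0 := by
        simpa using (hasDerivAt_id (0:ℂ)).const_mul (ε:ℂ)
      simp [hd.deriv, abs_of_pos hε0]
    · set F : ℝ → ℝ := fun r => Set.indicator (Set.Iio ε) (fun r => (2 / (1 - r ^ 2)) ^ 2) r with hF
      have h1 : (∫ z in ball (0:ℂ) ε, (2 / (1 - ‖z‖ ^ 2)) ^ 2) = ∫ z : ℂ, F ‖z‖ := by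
        rw [← integral_indicator measurableSet_ball]
        congr 1
        ext z
        by_cases hz : ‖z‖ < ε
        · rw [Set.indicator_of_mem (mem_ball_zero_iff.mpr hz)]
          exact (Set.indicator_of_mem (Set.mem_Iio.mpr hz) (fun r => (2 / (1 - r ^ 2)) ^ 2)).symm
        · rw [Set.indicator_of_notMem (fun h => hz (mem_ball_zero_iff.mp h))]
          exact (Set.indicator_of_notMem (fun h => hz (Set.mem_Iio.mp h)) (fun r => (2 / (1 - r ^ 2)) ^ 2)).symm
      rw [h1, integral_fun_norm_addHaar volume F]
      rw [Complex.finrank_real_complex, measureReal_def, Complex.volume_ball]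
      have h2 : ∫ y in Set.Ioi (0:ℝ), y ^ (2 - 1) • F y
          = ∫ y in Set.Ioo (0:ℝ) ε, y * (2 / (1 - y ^ 2)) ^ 2 := by
        rw [show Set.Ioo (0:ℝ) ε = Set.Ioi 0 ∩ Set.Iio ε by ext; simp,
          ← setIntegral_indicator measurableSet_Iio]
        apply setIntegral_congr_fun measurableSet_Ioi
        intro y _
        simp only [hF, pow_one, smul_eq_mul, Set.indicator_apply]
        by_cases hy : y ∈ Set.Iio ε <;> simp [hy]
      rw [h2, ← integral_Ioc_eq_integral_Ioo,
        ← intervalIntegral.integral_of_le hε0.le, interval_part ε hε0 hε1]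
      have hne : 1 - ε ^ 2 ≠ 0 := by nlinarith
      have : (ENNReal.ofReal 1 ^ 2 * NNReal.pi).toReal = π := by
        simp [ENNReal.toReal_mul]
      rw [this]
      simp only [smul_eq_mul, nsmul_eq_mul]
      field_simp
      ring
  · have hlim : Tendsto (fun ε : ℝ => (1 - ε ^ 2) / (4 * π)) (nhdsWithin 0 (Set.Ioi 0))
        (nhds (1 / (4 * π))) := by
      have hc : Continuous (fun ε : ℝ => (1 - ε ^ 2) / (4 * π)) := by continuity
      have := hc.tendsto 0
      simpa using this.mono_left nhdsWithin_le_nhds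
    refine hlim.congr' ?_
    filter_upwards [Ioo_mem_nhdsGT (by norm_num : (0:ℝ) < 1)] with ε hε
    have hε0 : ε ≠ 0 := ne_of_gt hε.1
    have hne : 1 - ε ^ 2 ≠ 0 := by nlinarith [hε.1, hε.2]
    have hπ : π ≠ 0 := pi_ne_zero
    field_simp
end

section
/- There is no constant c > 0 such that every analytic map f : 𝔻 → ℂ with spherical image area ∫_𝔻 |f'|² λ_S(f)² dA ≤ 4π satisfies |f'(0)| λ_S(f(0))/2 ≤ c · (∫_𝔻 |f'|² λ_S(f)² dA)^{1/2}. Indeed, for each λ ≠ 0, the map f(z) = λ z/(1−z)² is univalent with f(0)=0, has spherical image area at most 4π, and has |f'(0)| λ_S(f(0))/2 = |λ|, which is unbounded as |λ| → ∞. -/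
open MeasureTheory Metric Real
open Set

lemma radial_int (l : ℝ) (hl : 1 ≤ l) :
    ∫ y in Ioi (0:ℝ), y * (l^2 * (2/(1+l^2*y^2))^2) = 2 := by
  have hl0 : 0 < l := lt_of_lt_of_le one_pos hl
  have hpos : ∀ y : ℝ, (0:ℝ) < 1 + l^2*y^2 := fun y => by positivity
  have hderiv : ∀ y ∈ Ici (0:ℝ), HasDerivAt (fun y => -2/(1+l^2*y^2))
      (y * (l^2 * (2/(1+l^2*y^2))^2)) y := by
    intro y _
    have h1 : HasDerivAt (fun y : ℝ => 1 + l^2*y^2) (l^2*(2*y)) y := by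
      simpa using ((hasDerivAt_pow 2 y).const_mul (l^2)).const_add 1
    have h2 := (h1.inv (hpos y).ne').const_mul (-2 : ℝ)
    have heq : (fun y : ℝ => -2 * (1 + l^2*y^2)⁻¹) = fun y : ℝ => -2/(1+l^2*y^2) := by
      funext y; rw [div_eq_mul_inv]
    simp only [Pi.inv_apply] at h2
    rw [heq] at h2
    refine h2.congr_deriv ?_
    have := (hpos y).ne'
    field_simp
  have htend : Filter.Tendsto (fun y : ℝ => -2/(1+l^2*y^2)) Filter.atTop (nhds 0) := by
    have h1 : Filter.Tendsto (fun y : ℝ => 1 + l^2*y^2) Filter.atTop Filter.atTop := by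
      apply Filter.tendsto_atTop_add_const_left
      exact (Filter.tendsto_pow_atTop two_ne_zero).const_mul_atTop (by positivity)
    have h2 := h1.inv_tendsto_atTop.const_mul (-2 : ℝ)
    rw [mul_zero] at h2
    refine h2.congr fun y => ?_
    simp [div_eq_mul_inv]
  have hint := integral_Ioi_of_hasDerivAt_of_nonneg' hderiv
    (fun y hy => by have := le_of_lt hy.out; positivity) htend
  rw [hint]
  norm_num

lemma cont_G (l : ℝ) (hl : 1 ≤ l) : Continuous (fun z : ℂ => l^2 * (2/(1+l^2*‖z‖^2))^2) := by
  have hpos : ∀ z : ℂ, (0:ℝ) < 1 + l^2*‖z‖^2 := fun z => by positivity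
  fun_prop (disch := intro z; exact (hpos z).ne')

lemma integrable_G (l : ℝ) (hl : 1 ≤ l) :
    Integrable (fun z : ℂ => l^2 * (2/(1+l^2*‖z‖^2))^2) := by
  have hl0 : 0 < l := lt_of_lt_of_le one_pos hl
  have hbase : Integrable (fun z : ℂ => (1 + ‖z‖) ^ (-(4:ℝ))) :=
    integrable_one_add_norm (by simp [Complex.finrank_real_complex]; norm_num)
  refine ((hbase.const_mul (16*l^2)).mono' ((cont_G l hl).aestronglyMeasurable) ?_)
  filter_upwards with z
  have h0 : (0:ℝ) ≤ ‖z‖ := norm_nonneg z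
  have hpos : (0:ℝ) < 1 + l^2*‖z‖^2 := by positivity
  rw [Real.norm_of_nonneg (by positivity)]
  have hl2 : (1:ℝ) ≤ l^2 := one_le_pow₀ hl
  have hr : (1 + ‖z‖) ^ (-(4:ℝ)) = ((1+‖z‖)^(4:ℕ))⁻¹ := by
    rw [← Real.rpow_natCast (1+‖z‖) 4, ← Real.rpow_neg (by positivity)]
    norm_num
  rw [hr, ← div_eq_mul_inv]
  have e1 : l^2 * (2/(1 + l^2*‖z‖^2))^2 = 4*l^2/((1 + l^2*‖z‖^2)^2) := by
    rw [div_pow]; ring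
  rw [e1, div_le_div_iff₀ (by positivity) (by positivity)]
  have key : (1+‖z‖)^2 ≤ 2*(1 + l^2*‖z‖^2) := by
    nlinarith [mul_nonneg (sub_nonneg.2 hl2) (sq_nonneg ‖z‖), sq_nonneg (1-‖z‖)]
  have key4 := pow_le_pow_left₀ (sq_nonneg (1+‖z‖)) key 2
  nlinarith [key4, sq_nonneg l, mul_nonneg (sq_nonneg l) (sq_nonneg ((1+‖z‖)^2))]

lemma full_int (l : ℝ) (hl : 1 ≤ l) :
    ∫ z : ℂ, l^2 * (2/(1+l^2*‖z‖^2))^2 = 4 * π := by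
  have h := MeasureTheory.integral_fun_norm_addHaar (volume : Measure ℂ)
    (fun y : ℝ => l^2 * (2/(1+l^2*y^2))^2)
  simp only [Complex.finrank_real_complex] at h
  rw [show ∫ z : ℂ, l^2 * (2/(1+l^2*‖z‖^2))^2
      = ∫ z : ℂ, (fun y : ℝ => l^2 * (2/(1+l^2*y^2))^2) ‖z‖ from rfl, h]
  have hb : volume.real (ball (0:ℂ) 1) = π := by
    simp [Measure.real, Complex.volume_ball]
  rw [hb]
  have : ∫ y in Ioi (0:ℝ), y ^ (2-1) • (l^2 * (2/(1+l^2*y^2))^2)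
      = ∫ y in Ioi (0:ℝ), y * (l^2 * (2/(1+l^2*y^2))^2) := by
    norm_num [smul_eq_mul]
  rw [this, radial_int l hl]
  simp [smul_eq_mul]
  ring

lemma ball_int_le (l : ℝ) (hl : 1 ≤ l) :
    ∫ z in ball (0:ℂ) 1, l^2 * (2/(1+l^2*‖z‖^2))^2 ≤ 4 * π := by
  rw [← full_int l hl]
  exact setIntegral_le_integral (integrable_G l hl)
    (Filter.Eventually.of_forall fun z => by positivity)

theorem stmt8 :
    ¬ ∃ c : ℝ, 0 < c ∧
      ∀ f : ℂ → ℂ, AnalyticOn ℂ f (ball (0:ℂ) 1) →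
        (∫ z in ball (0:ℂ) 1, ‖deriv f z‖ ^ 2 * (2 / (1 + ‖f z‖ ^ 2)) ^ 2)
            ≤ 4 * π →
        ‖deriv f 0‖ * (2 / (1 + ‖f 0‖ ^ 2)) / 2 ≤
          c * Real.sqrt
            (∫ z in ball (0:ℂ) 1,
              ‖deriv f z‖ ^ 2 * (2 / (1 + ‖f z‖ ^ 2)) ^ 2) := by
  rintro ⟨c, hc, h⟩
  set l : ℝ := c * Real.sqrt (4 * π) + 1 with hldef
  have hl : 1 ≤ l := by
    have : 0 ≤ c * Real.sqrt (4*π) := mul_nonneg hc.le (Real.sqrt_nonneg _)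
    linarith
  have hl0 : 0 < l := lt_of_lt_of_le one_pos hl
  set f : ℂ → ℂ := fun z => (l:ℂ) * z with hfdef
  have hf : AnalyticOn ℂ f (ball (0:ℂ) 1) :=
    (analyticOnNhd_const.mul analyticOnNhd_id).analyticOn
  have hderiv : ∀ z : ℂ, deriv f z = (l:ℂ) := by
    intro z
    rw [hfdef]
    have := ((hasDerivAt_id z).const_mul ((l:ℂ))).deriv
    simpa using this
  have hnorm : ‖(l:ℂ)‖ = l := by
    rw [Complex.norm_real, Real.norm_of_nonneg hl0.le]
  have heq : ∀ z : ℂ, ‖deriv f z‖ ^ 2 * (2 / (1 + ‖f z‖ ^ 2)) ^ 2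
      = l^2 * (2/(1+l^2*‖z‖^2))^2 := by
    intro z
    rw [hderiv z, hnorm]
    have : ‖f z‖^2 = l^2 * ‖z‖^2 := by
      rw [hfdef]; simp only [norm_mul, hnorm, mul_pow]
    rw [this]
  have hIeq : (∫ z in ball (0:ℂ) 1, ‖deriv f z‖ ^ 2 * (2 / (1 + ‖f z‖ ^ 2)) ^ 2)
      = ∫ z in ball (0:ℂ) 1, l^2 * (2/(1+l^2*‖z‖^2))^2 := by
    exact integral_congr_ae (Filter.Eventually.of_forall fun z => heq z)
  have hIle : (∫ z in ball (0:ℂ) 1, ‖deriv f z‖ ^ 2 * (2 / (1 + ‖f z‖ ^ 2)) ^ 2) ≤ 4 * π := by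
    rw [hIeq]; exact ball_int_le l hl
  have hmain := h f hf hIle
  have hLHS : ‖deriv f 0‖ * (2 / (1 + ‖f 0‖ ^ 2)) / 2 = l := by
    rw [hderiv 0, hnorm, hfdef]
    norm_num
  rw [hLHS] at hmain
  have hsqrt : Real.sqrt (∫ z in ball (0:ℂ) 1,
      ‖deriv f z‖ ^ 2 * (2 / (1 + ‖f z‖ ^ 2)) ^ 2) ≤ Real.sqrt (4*π) :=
    Real.sqrt_le_sqrt hIle
  have : l ≤ c * Real.sqrt (4*π) :=
    hmain.trans (mul_le_mul_of_nonneg_left hsqrt hc.le)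
  linarith
end

section
/- Let f : 𝔻 → ℂ be analytic with finite Dirichlet integral A, and let B_H(z₀, δ) = {z ∈ 𝔻 : d_H(z₀, z) < δ} be the hyperbolic ball of radius δ about z₀. Then tanh(δ/2) · |f'(z₀)| (1−|z₀|²)/2 ≤ ( (1/(4π)) ∫_{B_H(z₀,δ)} |f'|² dA )^{1/2}. -/
open MeasureTheory Metric Real Complex Set

-- circle average
lemma circAvg {h : ℂ → ℂ} (hd : DifferentiableOn ℂ h (ball 0 1)) {ρ : ℝ}
    (hρ0 : 0 < ρ) (hρ1 : ρ < 1) :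
    ∫ θ in Set.Ioo (-π) π, h (ρ * Complex.exp (θ * Complex.I)) = (2 * π : ℝ) • h 0 := by
  have hdc : DiffContOnCl ℂ h (ball 0 ρ) := by
    refine ⟨hd.mono (ball_subset_ball hρ1.le), ?_⟩
    rw [closure_ball (0:ℂ) hρ0.ne']
    exact hd.continuousOn.mono (closedBall_subset_ball hρ1)
  have hc : (∮ z in C(0, ρ), (z - 0)⁻¹ • h z) = (2 * π * Complex.I) • h 0 :=
    hdc.circleIntegral_sub_inv_smul (mem_ball_self hρ0)
  rw [circleIntegral] at hc
  simp only [deriv_circleMap, smul_eq_mul, sub_zero] at hc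
  have hne : ∀ θ : ℝ, circleMap 0 ρ θ ≠ 0 := fun θ => circleMap_ne_center hρ0.ne'
  have hc2 : (∫ θ in (0:ℝ)..2*π, Complex.I * h (circleMap 0 ρ θ)) = 2 * π * Complex.I * h 0 := by
    rw [← hc]
    congr 1
    ext θ
    field_simp [hne θ]
  rw [intervalIntegral.integral_const_mul] at hc2
  have hI : (∫ θ in (0:ℝ)..2*π, h (circleMap 0 ρ θ)) = 2 * π * h 0 := by
    apply mul_left_cancel₀ Complex.I_ne_zero
    rw [hc2]; ring
  have hper : Function.Periodic (fun θ : ℝ => h (circleMap 0 ρ θ)) (2*π) :=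
    (periodic_circleMap 0 ρ).comp h
  have hshift : (∫ θ in (-π)..π, h (circleMap 0 ρ θ)) = ∫ θ in (0:ℝ)..2*π, h (circleMap 0 ρ θ) := by
    have h2 := hper.intervalIntegral_add_eq (-π) 0
    rw [show -π + 2*π = π by ring, zero_add] at h2
    exact h2
  have hset : (∫ θ in Set.Ioo (-π) π, h (ρ * Complex.exp (θ * Complex.I)))
      = ∫ θ in (-π)..π, h (circleMap 0 ρ θ) := by
    rw [intervalIntegral.integral_of_le (by linarith [Real.pi_pos] : (-π) ≤ π),
      ← MeasureTheory.integral_Ioc_eq_integral_Ioo]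
    simp [circleMap_zero]
  rw [hset, hshift, hI]
  simp [smul_eq_mul]

lemma meanValue {h : ℂ → ℂ} (hd : DifferentiableOn ℂ h (ball 0 1)) {r : ℝ}
    (hr0 : 0 < r) (hr1 : r < 1) :
    ∫ w in ball (0:ℂ) r, h w = (π * r ^ 2 : ℝ) • h 0 := by
  -- continuity of the polar integrand on a compact rectangle
  have hcont : ContinuousOn (fun p : ℝ × ℝ => p.1 • h (↑p.1 * Complex.exp (↑p.2 * Complex.I)))
      (Set.Icc 0 r ×ˢ Set.Icc (-π) π) := by
    have hmap : ContinuousOn (fun p : ℝ × ℝ => (↑p.1 * Complex.exp (↑p.2 * Complex.I) : ℂ))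
        (Set.Icc 0 r ×ˢ Set.Icc (-π) π) :=
      (Complex.continuous_ofReal.comp continuous_fst).continuousOn.mul
        ((Complex.continuous_exp.comp ((Complex.continuous_ofReal.comp
          continuous_snd).mul continuous_const)).continuousOn)
    have hmaps : Set.MapsTo (fun p : ℝ × ℝ => (↑p.1 * Complex.exp (↑p.2 * Complex.I) : ℂ))
        (Set.Icc 0 r ×ˢ Set.Icc (-π) π) (ball 0 1) := by
      intro p hp
      simp only [mem_ball, dist_zero_right]
      rw [Set.mem_prod] at hp
      have he : ‖(Complex.exp (↑p.2 * Complex.I))‖ = 1 := by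
        rw [Complex.norm_exp]; simp
      rw [norm_mul, he, mul_one, Complex.norm_real,
        Real.norm_eq_abs]
      calc |p.1| = p.1 := abs_of_nonneg hp.1.1
        _ ≤ r := hp.1.2
        _ < 1 := hr1
    exact (continuous_fst.continuousOn).smul (hd.continuousOn.comp hmap hmaps)
  have hint : IntegrableOn (fun p : ℝ × ℝ => p.1 • h (↑p.1 * Complex.exp (↑p.2 * Complex.I)))
      (Set.Ioo 0 r ×ˢ Set.Ioo (-π) π) := by
    refine (hcont.integrableOn_compact (isCompact_Icc.prod isCompact_Icc)).mono_set ?_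
    exact Set.prod_mono Set.Ioo_subset_Icc_self Set.Ioo_subset_Icc_self
  -- polar coordinates
  have hpolar : (∫ p in Set.Ioo 0 r ×ˢ Set.Ioo (-π) π,
      p.1 • h (↑p.1 * Complex.exp (↑p.2 * Complex.I))) = ∫ w in ball (0:ℂ) r, h w := by
    have h1 := Complex.integral_comp_polarCoord_symm ((ball (0:ℂ) r).indicator h)
    rw [MeasureTheory.integral_indicator measurableSet_ball] at h1
    rw [← h1]
    have hsub : (Set.Ioo 0 r ×ˢ Set.Ioo (-π) π) ⊆ polarCoord.target := by
      rw [polarCoord_target]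
      exact Set.prod_mono Set.Ioo_subset_Ioi_self subset_rfl
    have hmeas : MeasurableSet (Set.Ioo (0:ℝ) r ×ˢ Set.Ioo (-π) π) :=
      measurableSet_Ioo.prod measurableSet_Ioo
    have htmeas : MeasurableSet polarCoord.target := by
      rw [polarCoord_target]; exact measurableSet_Ioi.prod measurableSet_Ioo
    calc ∫ p in Set.Ioo 0 r ×ˢ Set.Ioo (-π) π, p.1 • h (↑p.1 * Complex.exp (↑p.2 * Complex.I))
        = ∫ p in polarCoord.target ∩ (Set.Ioo 0 r ×ˢ Set.Ioo (-π) π),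
            (fun q : ℝ × ℝ => q.1 • h (↑q.1 * Complex.exp (↑q.2 * Complex.I))) p := by
          rw [Set.inter_eq_self_of_subset_right hsub]
      _ = ∫ p in polarCoord.target, (Set.Ioo 0 r ×ˢ Set.Ioo (-π) π).indicator
            (fun q : ℝ × ℝ => q.1 • h (↑q.1 * Complex.exp (↑q.2 * Complex.I))) p :=
          (MeasureTheory.setIntegral_indicator hmeas).symm
      _ = ∫ p in polarCoord.target, p.1 • (ball 0 r).indicator h (Complex.polarCoord.symm p) := by
          refine MeasureTheory.setIntegral_congr_fun htmeas ?_
          intro p hp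
          rw [polarCoord_target, Set.mem_prod] at hp
          have hp1 : 0 < p.1 := hp.1
          have hsymm : Complex.polarCoord.symm p = ↑p.1 * Complex.exp (↑p.2 * Complex.I) := by
            rw [Complex.polarCoord_symm_apply, Complex.exp_mul_I]
            norm_num
          have habs : ‖(Complex.polarCoord.symm p)‖ = p.1 := by
            rw [hsymm, norm_mul, Complex.norm_real, Complex.norm_exp]
            simp [abs_of_pos hp1]
          by_cases hcase : p.1 < r
          · have hmem : p ∈ Set.Ioo (0:ℝ) r ×ˢ Set.Ioo (-π) π :=
              Set.mem_prod.2 ⟨⟨hp1, hcase⟩, hp.2⟩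
            have hball : Complex.polarCoord.symm p ∈ ball (0:ℂ) r := by
              rw [mem_ball, dist_zero_right, habs]; exact hcase
            rw [hsymm] at hball
            simp only [Set.indicator_of_mem hmem, hsymm, Set.indicator_of_mem hball]
          · have hmem : p ∉ Set.Ioo (0:ℝ) r ×ˢ Set.Ioo (-π) π := by
              intro hx
              exact hcase (Set.mem_prod.1 hx).1.2
            have hball : Complex.polarCoord.symm p ∉ ball (0:ℂ) r := by
              rw [mem_ball, dist_zero_right, habs]
              exact fun hx => hcase hx
            simp only [Set.indicator_of_notMem hmem, Set.indicator_of_notMem hball, smul_zero]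
  -- Fubini
  rw [← hpolar]
  rw [MeasureTheory.Measure.volume_eq_prod] at hint
  rw [MeasureTheory.Measure.volume_eq_prod ℝ ℝ, MeasureTheory.setIntegral_prod _ hint]
  have hinner : ∀ ρ ∈ Set.Ioo (0:ℝ) r,
      (∫ θ in Set.Ioo (-π) π, (ρ:ℝ) • h (↑ρ * Complex.exp (↑θ * Complex.I)))
        = (2 * π * ρ : ℝ) • h 0 := by
    intro ρ hρ
    rw [MeasureTheory.integral_smul, circAvg hd hρ.1 (hρ.2.trans hr1), smul_smul]
    congr 1
    ring
  rw [MeasureTheory.setIntegral_congr_fun measurableSet_Ioo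
    (fun ρ hρ => hinner ρ hρ : Set.EqOn _ (fun ρ => (2 * π * ρ : ℝ) • h 0) _)]
  rw [integral_smul_const]
  congr 1
  rw [← MeasureTheory.integral_Ioc_eq_integral_Ioo, ← intervalIntegral.integral_of_le hr0.le]
  rw [intervalIntegral.integral_const_mul, integral_id]
  ring

lemma det_complex_mul (c : ℂ) :
    ((ContinuousLinearMap.smulRight (1 : ℂ →L[ℂ] ℂ) c).restrictScalars ℝ).det
      = Complex.normSq c := by
  have heq : (((ContinuousLinearMap.smulRight (1 : ℂ →L[ℂ] ℂ) c).restrictScalars ℝ) :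
      ℂ →ₗ[ℝ] ℂ) = Algebra.lmul ℝ ℂ c := by
    apply LinearMap.ext
    intro z
    simp [mul_comm]
  rw [ContinuousLinearMap.det, heq, ← Algebra.norm_apply, Algebra.norm_complex_apply]

section Mobius

variable {z₀ : ℂ}

noncomputable def psi (z₀ w : ℂ) : ℂ := (w + z₀) / (1 + (starRingEnd ℂ) z₀ * w)

lemma denom_ne1 (hz : ‖z₀‖ < 1) {w : ℂ} (hw : ‖w‖ < 1) : (1 + (starRingEnd ℂ) z₀ * w) ≠ 0 := by
  intro h
  have h2 : ‖(starRingEnd ℂ) z₀ * w‖ < 1 := by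
    rw [norm_mul, RCLike.norm_conj]
    calc ‖z₀‖ * ‖w‖ ≤ 1 * ‖w‖ := by
          exact mul_le_mul_of_nonneg_right hz.le (norm_nonneg _)
      _ = ‖w‖ := one_mul _
      _ < 1 := hw
  have h3 : (starRingEnd ℂ) z₀ * w = -1 := by linear_combination h
  rw [h3] at h2
  simp at h2

lemma denom_ne2 (hz : ‖z₀‖ < 1) {z : ℂ} (hzz : ‖z‖ < 1) : (1 - (starRingEnd ℂ) z₀ * z) ≠ 0 := by
  intro h
  have h2 : ‖(starRingEnd ℂ) z₀ * z‖ < 1 := by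
    rw [norm_mul, RCLike.norm_conj]
    calc ‖z₀‖ * ‖z‖ ≤ 1 * ‖z‖ := mul_le_mul_of_nonneg_right hz.le (norm_nonneg _)
      _ = ‖z‖ := one_mul _
      _ < 1 := hzz
  have h3 : (starRingEnd ℂ) z₀ * z = 1 := by linear_combination -h
  rw [h3] at h2
  simp at h2

lemma normSq_diff (w : ℂ) :
    Complex.normSq (1 + (starRingEnd ℂ) z₀ * w) - Complex.normSq (w + z₀)
      = (1 - Complex.normSq z₀) * (1 - Complex.normSq w) := by
  simp only [Complex.normSq_apply, Complex.add_re, Complex.add_im, Complex.mul_re,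
    Complex.mul_im, Complex.one_re, Complex.one_im, Complex.conj_re, Complex.conj_im]
  ring

lemma normSq_lt_one {z : ℂ} (hzz : ‖z‖ < 1) : Complex.normSq z < 1 := by
  rw [← Complex.sq_norm]
  calc ‖z‖ ^ 2 ≤ ‖z‖ * 1 := by rw [sq]; exact mul_le_mul_of_nonneg_left hzz.le (norm_nonneg _)
    _ = ‖z‖ := mul_one _
    _ < 1 := hzz

lemma norm_lt_of_normSq_lt {a b : ℂ} (h : Complex.normSq a < Complex.normSq b) : ‖a‖ < ‖b‖ := by
  apply lt_of_pow_lt_pow_left₀ 2 (norm_nonneg b)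
  rw [Complex.sq_norm, Complex.sq_norm]
  exact h

lemma psi_mem (hz : ‖z₀‖ < 1) {w : ℂ} (hw : ‖w‖ < 1) : ‖psi z₀ w‖ < 1 := by
  have hden := denom_ne1 (z₀ := z₀) hz hw
  have h1 : Complex.normSq z₀ < 1 := normSq_lt_one hz
  have h2 : Complex.normSq w < 1 := normSq_lt_one hw
  have h3 := normSq_diff (z₀ := z₀) w
  have hlt : Complex.normSq (w + z₀) < Complex.normSq (1 + (starRingEnd ℂ) z₀ * w) := by
    nlinarith
  rw [psi, norm_div, div_lt_one (norm_pos_iff.mpr hden)]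
  exact norm_lt_of_normSq_lt hlt

lemma phi_psi (hz : ‖z₀‖ < 1) {w : ℂ} (hw : ‖w‖ < 1) :
    (psi z₀ w - z₀) / (1 - (starRingEnd ℂ) z₀ * psi z₀ w) = w := by
  have hden := denom_ne1 (z₀ := z₀) hz hw
  have ht := denom_ne2 (z₀ := z₀) hz hz
  have h1 : psi z₀ w - z₀
      = w * ((1 - (starRingEnd ℂ) z₀ * z₀) / (1 + (starRingEnd ℂ) z₀ * w)) := by
    rw [psi]
    rw [div_sub' hden, ← mul_div_assoc]
    congr 1
    ring
  have h2 : 1 - (starRingEnd ℂ) z₀ * psi z₀ w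
      = (1 - (starRingEnd ℂ) z₀ * z₀) / (1 + (starRingEnd ℂ) z₀ * w) := by
    rw [psi]
    field_simp
    ring
  rw [h1, h2, mul_div_cancel_right₀ _ (div_ne_zero ht hden)]

lemma psi_phi (hz : ‖z₀‖ < 1) {z : ℂ} (hzz : ‖z‖ < 1) :
    psi z₀ ((z - z₀) / (1 - (starRingEnd ℂ) z₀ * z)) = z := by
  have hu := denom_ne2 (z₀ := z₀) hz hzz
  have ht := denom_ne2 (z₀ := z₀) hz hz
  have h1 : ((z - z₀) / (1 - (starRingEnd ℂ) z₀ * z) + z₀)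
      = z * (1 - (starRingEnd ℂ) z₀ * z₀) / (1 - (starRingEnd ℂ) z₀ * z) := by
    rw [div_add' _ _ _ hu]
    congr 1
    ring
  have h2 : (1 + (starRingEnd ℂ) z₀ * ((z - z₀) / (1 - (starRingEnd ℂ) z₀ * z)))
      = (1 - (starRingEnd ℂ) z₀ * z₀) / (1 - (starRingEnd ℂ) z₀ * z) := by
    field_simp
    ring
  have h1' : ((z - z₀) / (1 - (starRingEnd ℂ) z₀ * z) + z₀)
      = z * ((1 - (starRingEnd ℂ) z₀ * z₀) / (1 - (starRingEnd ℂ) z₀ * z)) := by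
    rw [h1, mul_div_assoc]
  rw [psi, h1', h2, mul_div_cancel_right₀ _ (div_ne_zero ht hu)]



lemma psi_hasDerivAt (hz : ‖z₀‖ < 1) {w : ℂ} (hw : ‖w‖ < 1) :
    HasDerivAt (psi z₀)
      ((1 - (starRingEnd ℂ) z₀ * z₀) / (1 + (starRingEnd ℂ) z₀ * w) ^ 2) w := by
  have hden := denom_ne1 (z₀ := z₀) hz hw
  have h1 : HasDerivAt (fun u : ℂ => u + z₀) 1 w := (hasDerivAt_id w).add_const z₀
  have h2 : HasDerivAt (fun u : ℂ => 1 + (starRingEnd ℂ) z₀ * u) ((starRingEnd ℂ) z₀) w := by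
    simpa using ((hasDerivAt_id w).const_mul ((starRingEnd ℂ) z₀)).const_add 1
  have h3 := h1.div h2 hden
  have h4 : (1 * (1 + (starRingEnd ℂ) z₀ * w) - (w + z₀) * (starRingEnd ℂ) z₀)
      / (1 + (starRingEnd ℂ) z₀ * w) ^ 2
      = (1 - (starRingEnd ℂ) z₀ * z₀) / (1 + (starRingEnd ℂ) z₀ * w) ^ 2 := by
    congr 1
    ring
  rw [h4] at h3
  exact h3

lemma psi_inj (hz : ‖z₀‖ < 1) {r : ℝ} (hr1 : r < 1) : Set.InjOn (psi z₀) (ball (0:ℂ) r) := by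
  intro a ha b hb hab
  have ha1 : ‖a‖ < 1 := lt_trans (mem_ball_zero_iff.mp ha) hr1
  have hb1 : ‖b‖ < 1 := lt_trans (mem_ball_zero_iff.mp hb) hr1
  have := phi_psi (z₀ := z₀) hz ha1
  rw [hab, phi_psi (z₀ := z₀) hz hb1] at this
  exact this.symm

lemma image_eq (hz : ‖z₀‖ < 1) {r : ℝ} (hr1 : r < 1) :
    {z : ℂ | z ∈ ball (0:ℂ) 1 ∧ ‖(z - z₀) / (1 - (starRingEnd ℂ) z₀ * z)‖ < r}
      = psi z₀ '' ball (0:ℂ) r := by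
  ext z
  simp only [Set.mem_setOf_eq, Set.mem_image, mem_ball, dist_zero_right]
  constructor
  · rintro ⟨h1, h2⟩
    exact ⟨(z - z₀) / (1 - (starRingEnd ℂ) z₀ * z), h2, psi_phi hz h1⟩
  · rintro ⟨w, hw, rfl⟩
    have hw1 : ‖w‖ < 1 := lt_trans hw hr1
    refine ⟨psi_mem hz hw1, ?_⟩
    rw [phi_psi hz hw1]
    exact hw

end Mobius

lemma tanh_lt_one' (x : ℝ) : Real.tanh x < 1 := by
  rw [Real.tanh_eq_sinh_div_cosh, div_lt_one (Real.cosh_pos _)]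
  rw [Real.sinh_eq, Real.cosh_eq]
  have := Real.exp_pos (-x)
  linarith

lemma tanh_pos' {x : ℝ} (hx : 0 < x) : 0 < Real.tanh x := by
  rw [Real.tanh_eq_sinh_div_cosh]
  exact div_pos (Real.sinh_pos_iff.mpr hx) (Real.cosh_pos _)

set_option maxHeartbeats 1000000 in
theorem stmt12 (f : ℂ → ℂ)
    (hf : AnalyticOn ℂ f (ball (0:ℂ) 1))
    (hA : IntegrableOn (fun z => ‖deriv f z‖ ^ 2) (ball (0:ℂ) 1))
    (z₀ : ℂ) (hz₀ : z₀ ∈ ball (0:ℂ) 1) (δ : ℝ) (hδ : 0 < δ) :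
    Real.tanh (δ / 2) * (‖deriv f z₀‖ * (1 - ‖z₀‖ ^ 2) / 2) ≤
      Real.sqrt ((1 / (4 * π)) *
        ∫ z in {z : ℂ | z ∈ ball (0:ℂ) 1 ∧
          ‖(z - z₀) / (1 - (starRingEnd ℂ) z₀ * z)‖ < Real.tanh (δ / 2)},
          ‖deriv f z‖ ^ 2) := by
  set r : ℝ := Real.tanh (δ / 2) with hrdef
  have hr0 : 0 < r := tanh_pos' (by linarith)
  have hr1 : r < 1 := tanh_lt_one' _
  have hz : ‖z₀‖ < 1 := mem_ball_zero_iff.mp hz₀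
  have hfa : AnalyticOnNhd ℂ f (ball (0:ℂ) 1) :=
    (isOpen_ball.analyticOn_iff_analyticOnNhd).mp hf
  have hf'd : DifferentiableOn ℂ (deriv f) (ball (0:ℂ) 1) := hfa.deriv.differentiableOn
  set ψd : ℂ → ℂ :=
    fun w => (1 - (starRingEnd ℂ) z₀ * z₀) / (1 + (starRingEnd ℂ) z₀ * w) ^ 2 with hψddef
  set h : ℂ → ℂ := fun w => deriv f (psi z₀ w) * ψd w with hhdef
  -- h is differentiable on the unit ball
  have hψdiff : DifferentiableOn ℂ (psi z₀) (ball (0:ℂ) 1) := fun w hw =>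
    ((psi_hasDerivAt hz (mem_ball_zero_iff.mp hw)).differentiableAt).differentiableWithinAt
  have hmaps : Set.MapsTo (psi z₀) (ball (0:ℂ) 1) (ball (0:ℂ) 1) := fun w hw =>
    mem_ball_zero_iff.mpr (psi_mem hz (mem_ball_zero_iff.mp hw))
  have hψddiff : DifferentiableOn ℂ ψd (ball (0:ℂ) 1) := by
    intro w hw
    have hden := denom_ne1 hz (mem_ball_zero_iff.mp hw)
    have hd1 : DifferentiableAt ℂ
        (fun u : ℂ => (1 + (starRingEnd ℂ) z₀ * u) ^ 2) w :=
      DifferentiableAt.pow ((differentiableAt_const _).add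
        ((differentiableAt_const _).mul differentiableAt_id)) 2
    exact ((differentiableAt_const _).div hd1
      (pow_ne_zero 2 hden)).differentiableWithinAt
  have hhd : DifferentiableOn ℂ h (ball (0:ℂ) 1) :=
    (hf'd.comp hψdiff hmaps).mul hψddiff
  -- mean value for h^2
  have hmv := meanValue ((hhd.mul hhd) : DifferentiableOn ℂ (fun w => h w * h w) _) hr0 hr1
  -- change of variables
  have hset : {z : ℂ | z ∈ ball (0:ℂ) 1 ∧
      ‖(z - z₀) / (1 - (starRingEnd ℂ) z₀ * z)‖ < r} = psi z₀ '' ball (0:ℂ) r :=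
    image_eq hz hr1
  have hcov : (∫ z in psi z₀ '' ball (0:ℂ) r, ‖deriv f z‖ ^ 2)
      = ∫ w in ball (0:ℂ) r, ‖h w‖ ^ 2 := by
    rw [MeasureTheory.integral_image_eq_integral_abs_det_fderiv_smul volume measurableSet_ball
      (fun x hx => ((psi_hasDerivAt hz
        (lt_trans (mem_ball_zero_iff.mp hx) hr1)).hasFDerivAt.restrictScalars
          ℝ).hasFDerivWithinAt) (psi_inj hz hr1) (fun z => ‖deriv f z‖ ^ 2)]
    refine MeasureTheory.setIntegral_congr_fun measurableSet_ball ?_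
    intro x hx
    have hdet : ((ContinuousLinearMap.toSpanSingleton ℂ
        ((1 - (starRingEnd ℂ) z₀ * z₀) / (1 + (starRingEnd ℂ) z₀ * x) ^ 2)).restrictScalars ℝ).det
        = Complex.normSq (ψd x) := det_complex_mul (ψd x)
    simp only [hdet, smul_eq_mul]
    rw [_root_.abs_of_nonneg (Complex.normSq_nonneg _)]
    have : Complex.normSq (ψd x) = ‖ψd x‖ ^ 2 := by
      rw [← Complex.sq_norm]
    rw [this, hhdef]
    simp only [norm_mul]
    ring
  -- numeric conclusion
  rw [hset, hcov]
  set m := ∫ w in ball (0:ℂ) r, ‖h w‖ ^ 2 with hmdef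
  have hm0 : 0 ≤ m :=
    MeasureTheory.setIntegral_nonneg measurableSet_ball (fun w _ => sq_nonneg _)
  have hkey : π * r ^ 2 * ‖h 0‖ ^ 2 ≤ m := by
    have h1 : ‖(π * r ^ 2 : ℝ) • (h 0 * h 0)‖ = π * r ^ 2 * ‖h 0‖ ^ 2 := by
      rw [norm_smul, Real.norm_eq_abs,
        _root_.abs_of_nonneg (by positivity : (0:ℝ) ≤ π * r ^ 2), norm_mul]
      ring
    calc π * r ^ 2 * ‖h 0‖ ^ 2 = ‖∫ w in ball (0:ℂ) r, h w * h w‖ := by simp only [Pi.mul_apply] at hmv; rw [hmv, h1]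
      _ ≤ ∫ w in ball (0:ℂ) r, ‖h w * h w‖ := MeasureTheory.norm_integral_le_integral_norm _
      _ = m := by
          rw [hmdef]
          congr 1
          funext w
          rw [norm_mul, sq]
  have hh0 : ‖h 0‖ = ‖deriv f z₀‖ * (1 - ‖z₀‖ ^ 2) := by
    have hpsi0 : psi z₀ 0 = z₀ := by simp [psi]
    have hc : (starRingEnd ℂ) z₀ * z₀ = (Complex.normSq z₀ : ℂ) := by
      rw [Complex.normSq_eq_conj_mul_self]
    have hψd0 : ψd 0 = ((1 - ‖z₀‖ ^ 2 : ℝ) : ℂ) := by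
      rw [hψddef]
      simp only [mul_zero, add_zero, one_pow, div_one, hc]
      rw [← Complex.sq_norm]
      push_cast
      ring
    rw [hhdef]
    simp only [hpsi0, hψd0, norm_mul, Complex.norm_real, Real.norm_eq_abs]
    rw [_root_.abs_of_nonneg (show (0:ℝ) ≤ 1 - ‖z₀‖ ^ 2 by
      have := (pow_lt_one₀ (norm_nonneg z₀) hz two_ne_zero).le
      linarith)]
  have hz2 : (0:ℝ) ≤ 1 - ‖z₀‖ ^ 2 := by
    have := (pow_lt_one₀ (norm_nonneg z₀) hz two_ne_zero).le
    linarith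
  have hLHS : 0 ≤ r * (‖deriv f z₀‖ * (1 - ‖z₀‖ ^ 2) / 2) := by
    have hd0 := norm_nonneg (deriv f z₀)
    positivity
  refine Real.le_sqrt_of_sq_le ?_
  calc (r * (‖deriv f z₀‖ * (1 - ‖z₀‖ ^ 2) / 2)) ^ 2
      = (π * r ^ 2 * (‖deriv f z₀‖ * (1 - ‖z₀‖ ^ 2)) ^ 2) / (4 * π) := by
        have := Real.pi_pos
        field_simp
        ring
    _ ≤ m / (4 * π) := by
        have := Real.pi_pos
        apply div_le_div_of_nonneg_right ?_ (by positivity)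
        rw [← hh0]
        exact hkey
    _ = 1 / (4 * π) * m := by ring
end

section
/- Let f₀, f_∞ : 𝔻 → ℂ be analytic with |f₀(z)|² + |f_∞(z)|² ≤ 1 and |f₀(z)|² + |f_∞(z)|² > δ² for all z ∈ 𝔻, where δ > 0, and suppose f_∞ is nowhere zero so that f = f₀/f_∞ is analytic on 𝔻. Then for every z ∈ 𝔻 the hyperbolic-to-spherical derivative norm satisfies (2|f'(z)|/(1+|f(z)|²)) · (1−|z|²)/2 ≤ 2/δ. -/
open MeasureTheory Metric Real


private lemma mobius_normSq (a w : ℂ) :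
    Complex.normSq (1 - (starRingEnd ℂ a) * w) - Complex.normSq (w - a) =
      (1 - Complex.normSq a) * (1 - Complex.normSq w) := by
  simp [Complex.normSq_apply, Complex.mul_re, Complex.mul_im, Complex.sub_re, Complex.sub_im,
    Complex.one_re, Complex.one_im, Complex.conj_re, Complex.conj_im]
  ring

private lemma mobius_den_ne_zero {a ζ : ℂ} (ha : ‖a‖ < 1) (hζ : ‖ζ‖ ≤ 1) :
    1 - (starRingEnd ℂ a) * ζ ≠ 0 := by
  intro h
  have h1 : (starRingEnd ℂ a) * ζ = 1 := by linear_combination -h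
  have h2 := congrArg norm h1
  rw [norm_mul] at h2
  simp only [RCLike.norm_conj, norm_one] at h2
  nlinarith [norm_nonneg ζ, norm_nonneg a]

private lemma norm_sq_eq (x : ℂ) : Complex.normSq x = ‖x‖ ^ 2 := by
  rw [Complex.normSq_eq_norm_sq]

private lemma mobius_norm_le {a ζ : ℂ} (ha : ‖a‖ < 1) (hζ : ‖ζ‖ ≤ 1) :
    ‖(ζ - a) / (1 - (starRingEnd ℂ a) * ζ)‖ ≤ 1 := by
  have hden := mobius_den_ne_zero ha hζ
  rw [norm_div, div_le_one (norm_pos_iff.mpr hden)]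
  have h := mobius_normSq a ζ
  rw [norm_sq_eq, norm_sq_eq, norm_sq_eq, norm_sq_eq] at h
  rw [← pow_le_pow_iff_left₀ (norm_nonneg _) (norm_nonneg _) (two_ne_zero)]
  have ha2 : ‖a‖ ^ 2 < 1 := by nlinarith [norm_nonneg a]
  have hζ2 : ‖ζ‖ ^ 2 ≤ 1 := by nlinarith [norm_nonneg ζ]
  nlinarith [mul_nonneg (sub_nonneg.mpr ha2.le) (sub_nonneg.mpr hζ2)]

private lemma mobius_norm_lt {a ζ : ℂ} (ha : ‖a‖ < 1) (hζ : ‖ζ‖ < 1) :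
    ‖(ζ - a) / (1 - (starRingEnd ℂ a) * ζ)‖ < 1 := by
  have hden := mobius_den_ne_zero ha hζ.le
  rw [norm_div, div_lt_one (norm_pos_iff.mpr hden)]
  have h := mobius_normSq a ζ
  rw [norm_sq_eq, norm_sq_eq, norm_sq_eq, norm_sq_eq] at h
  rw [← pow_lt_pow_iff_left₀ (norm_nonneg _) (norm_nonneg _) (two_ne_zero)]
  have ha2 : ‖a‖ ^ 2 < 1 := by nlinarith [norm_nonneg a]
  have hζ2 : ‖ζ‖ ^ 2 < 1 := by nlinarith [norm_nonneg ζ]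
  nlinarith [mul_pos (sub_pos.mpr ha2) (sub_pos.mpr hζ2)]

private lemma mobius_hasDerivAt (a w : ℂ) (h : 1 - (starRingEnd ℂ a) * w ≠ 0) :
    HasDerivAt (fun x => (x - a) / (1 - (starRingEnd ℂ a) * x))
      ((1 - (starRingEnd ℂ a) * a) / (1 - (starRingEnd ℂ a) * w) ^ 2) w := by
  have h1 : HasDerivAt (fun x : ℂ => x - a) 1 w := (hasDerivAt_id w).sub_const a
  have h2 : HasDerivAt (fun x : ℂ => 1 - (starRingEnd ℂ a) * x) (-(starRingEnd ℂ a)) w := by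
    simpa using ((hasDerivAt_id w).const_mul (starRingEnd ℂ a)).const_sub 1
  have := h1.div h2 h
  exact this.congr_deriv (by ring)

private lemma schwarz_pick (g : ℂ → ℂ) (hg : DifferentiableOn ℂ g (ball 0 1))
    (hb : ∀ w ∈ ball (0:ℂ) 1, ‖g w‖ ≤ 1) {z : ℂ} (hz : z ∈ ball (0:ℂ) 1) :
    ‖deriv g z‖ * (1 - ‖z‖ ^ 2) ≤ 1 := by
  have hzn : ‖z‖ < 1 := by simpa [dist_zero_right] using hz
  set a := g z with ha_def
  by_cases ha : ‖a‖ < 1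
  · -- main case, via two Möbius transforms
    set φ : ℂ → ℂ := fun w => (w - (-z)) / (1 - (starRingEnd ℂ (-z)) * w) with hφ_def
    have hφmaps : ∀ w ∈ ball (0:ℂ) 1, φ w ∈ ball (0:ℂ) 1 := by
      intro w hw
      have hwn : ‖w‖ < 1 := by simpa [dist_zero_right] using hw
      have := mobius_norm_lt (a := -z) (ζ := w) (by simpa using hzn) hwn
      simpa [dist_zero_right, hφ_def] using this
    set k : ℂ → ℂ := fun w => (g (φ w) - a) / (1 - (starRingEnd ℂ a) * g (φ w)) with hk_def
    have hφ0 : φ 0 = z := by simp [hφ_def]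
    have hk0 : k 0 = 0 := by simp [hk_def, hφ0, ← ha_def]
    have hkle : ∀ w ∈ ball (0:ℂ) 1, ‖k w‖ ≤ 1 := fun w hw =>
      mobius_norm_le ha (hb _ (hφmaps w hw))
    -- differentiability of k on the ball
    have hφdiff : DifferentiableOn ℂ φ (ball 0 1) := by
      intro w hw
      have hwn : ‖w‖ < 1 := by simpa [dist_zero_right] using hw
      have hden : 1 - (starRingEnd ℂ (-z)) * w ≠ 0 :=
        mobius_den_ne_zero (by simpa using hzn) hwn.le
      exact ((mobius_hasDerivAt (-z) w hden).differentiableAt).differentiableWithinAt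
    have hkdiff : DifferentiableOn ℂ k (ball 0 1) := by
      intro w hw
      have hgw : ‖g (φ w)‖ ≤ 1 := hb _ (hφmaps w hw)
      have hden : 1 - (starRingEnd ℂ a) * g (φ w) ≠ 0 := mobius_den_ne_zero ha hgw
      have hM : DifferentiableAt ℂ (fun ζ => (ζ - a) / (1 - (starRingEnd ℂ a) * ζ)) (g (φ w)) :=
        (mobius_hasDerivAt a (g (φ w)) hden).differentiableAt
      exact hM.comp_differentiableWithinAt w
        ((hg _ (hφmaps w hw)).comp w (hφdiff w hw) (fun x hx => hφmaps x hx))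
    -- Schwarz lemma bound
    have hk1 : ‖deriv k 0‖ ≤ 1 := by
      have key : ∀ ε : ℝ, 0 < ε → ‖deriv k 0‖ ≤ 1 + ε := by
        intro ε hε
        have hmaps : Set.MapsTo k (ball 0 1) (ball (k 0) (1 + ε)) := by
          intro w hw
          rw [hk0, mem_ball, dist_zero_right]
          exact lt_of_le_of_lt (hkle w hw) (by linarith)
        have := Complex.norm_deriv_le_div_of_mapsTo_ball hkdiff (hmaps.mono_right ball_subset_closedBall) one_pos
        simpa using this
      exact le_of_forall_pos_le_add fun ε hε => key ε hε
    -- compute deriv k 0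
    have hgz : HasDerivAt g (deriv g z) z :=
      (hg.differentiableAt (isOpen_ball.mem_nhds hz)).hasDerivAt
    have hdenφ : 1 - (starRingEnd ℂ (-z)) * 0 ≠ 0 := by simp
    have hφd : HasDerivAt φ ((1 - (starRingEnd ℂ (-z)) * (-z)) / (1 - (starRingEnd ℂ (-z)) * 0) ^ 2) 0 :=
      mobius_hasDerivAt (-z) 0 hdenφ
    have hgφ : HasDerivAt (fun w => g (φ w))
        (deriv g z * ((1 - (starRingEnd ℂ (-z)) * (-z)) / (1 - (starRingEnd ℂ (-z)) * 0) ^ 2)) 0 := by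
      have hgz' : HasDerivAt g (deriv g z) (φ 0) := by rw [hφ0]; exact hgz
      exact HasDerivAt.comp 0 hgz' hφd
    have hdena : 1 - (starRingEnd ℂ a) * a ≠ 0 := mobius_den_ne_zero ha ha.le
    have hMd : HasDerivAt (fun ζ => (ζ - a) / (1 - (starRingEnd ℂ a) * ζ))
        ((1 - (starRingEnd ℂ a) * a) / (1 - (starRingEnd ℂ a) * a) ^ 2) a :=
      mobius_hasDerivAt a a hdena
    have hkd : HasDerivAt k
        (((1 - (starRingEnd ℂ a) * a) / (1 - (starRingEnd ℂ a) * a) ^ 2) *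
          (deriv g z * ((1 - (starRingEnd ℂ (-z)) * (-z)) / (1 - (starRingEnd ℂ (-z)) * 0) ^ 2))) 0 := by
      have hMd' : HasDerivAt (fun ζ => (ζ - a) / (1 - (starRingEnd ℂ a) * ζ))
          ((1 - (starRingEnd ℂ a) * a) / (1 - (starRingEnd ℂ a) * a) ^ 2) (g (φ 0)) := by
        rw [hφ0, ← ha_def]; exact hMd
      exact HasDerivAt.comp 0 hMd' hgφ
    have hderiv_k : deriv k 0 = (deriv g z * (1 - (starRingEnd ℂ a) * a)⁻¹) *
        (1 - (starRingEnd ℂ (-z)) * (-z)) := by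
      rw [hkd.deriv]
      field_simp
      ring
    -- norms
    have hca : (1 - (starRingEnd ℂ a) * a) = ((1 - ‖a‖ ^ 2 : ℝ) : ℂ) := by
      rw [Complex.conj_mul']
      push_cast [norm_sq_eq]
      ring
    have hcz : (1 - (starRingEnd ℂ (-z)) * (-z)) = ((1 - ‖z‖ ^ 2 : ℝ) : ℂ) := by
      rw [Complex.conj_mul']
      push_cast [norm_sq_eq]
      simp [Complex.normSq_neg, norm_sq_eq]
    have hpos : (0:ℝ) < 1 - ‖a‖ ^ 2 := by nlinarith [norm_nonneg a]
    have hposz : (0:ℝ) < 1 - ‖z‖ ^ 2 := by nlinarith [norm_nonneg z]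
    have han : ‖deriv k 0‖ = ‖deriv g z‖ * (1 - ‖a‖ ^ 2)⁻¹ * (1 - ‖z‖ ^ 2) := by
      rw [hderiv_k, norm_mul, norm_mul, norm_inv, hca, hcz, Complex.norm_real,
        Complex.norm_real, Real.norm_eq_abs, Real.norm_eq_abs,
        abs_of_pos hpos, abs_of_pos hposz]
    rw [han] at hk1
    have hX : ‖deriv g z‖ * (1 - ‖z‖ ^ 2) ≤ 1 - ‖a‖ ^ 2 := by
      have h2 := mul_le_mul_of_nonneg_left hk1 hpos.le
      rw [mul_one] at h2
      calc ‖deriv g z‖ * (1 - ‖z‖ ^ 2)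
          = (1 - ‖a‖ ^ 2) * (‖deriv g z‖ * (1 - ‖a‖ ^ 2)⁻¹ * (1 - ‖z‖ ^ 2)) := by
            rw [show (1 - ‖a‖ ^ 2) * (‖deriv g z‖ * (1 - ‖a‖ ^ 2)⁻¹ * (1 - ‖z‖ ^ 2))
                = (‖deriv g z‖ * (1 - ‖z‖ ^ 2)) * ((1 - ‖a‖ ^ 2) * (1 - ‖a‖ ^ 2)⁻¹) from by ring,
              mul_inv_cancel₀ hpos.ne', mul_one]
        _ ≤ 1 - ‖a‖ ^ 2 := h2
    nlinarith [sq_nonneg ‖a‖]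
  · -- boundary case: g is constant
    push_neg at ha
    have haeq : ‖a‖ = 1 := le_antisymm (hb z hz) ha
    have hmax : IsMaxOn (norm ∘ g) (ball (0:ℂ) 1) z := by
      intro w hw
      simp only [Function.comp_apply, Set.mem_setOf_eq, ← ha_def, haeq]
      exact hb w hw
    have heq := Complex.eqOn_of_isPreconnected_of_isMaxOn_norm
      (convex_ball (0:ℂ) 1).isPreconnected isOpen_ball hg hz hmax
    have hev : g =ᶠ[nhds z] fun _ => a := by
      filter_upwards [isOpen_ball.mem_nhds hz] with w hw using heq hw
    have : deriv g z = 0 := by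
      rw [hev.deriv_eq, deriv_const]
    simp [this]

theorem stmt14 (f₀ f_inf : ℂ → ℂ) (δ : ℝ) (hδ : 0 < δ)
    (h₀ : AnalyticOn ℂ f₀ (ball (0:ℂ) 1))
    (hinf : AnalyticOn ℂ f_inf (ball (0:ℂ) 1))
    (hne : ∀ z ∈ ball (0:ℂ) 1, f_inf z ≠ 0)
    (hub : ∀ z ∈ ball (0:ℂ) 1, ‖f₀ z‖ ^ 2 + ‖f_inf z‖ ^ 2 ≤ 1)
    (hlb : ∀ z ∈ ball (0:ℂ) 1, δ ^ 2 < ‖f₀ z‖ ^ 2 + ‖f_inf z‖ ^ 2)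
    (f : ℂ → ℂ) (hfdef : ∀ z ∈ ball (0:ℂ) 1, f z = f₀ z / f_inf z) :
    ∀ z ∈ ball (0:ℂ) 1,
      (2 * ‖deriv f z‖ / (1 + ‖f z‖ ^ 2)) * ((1 - ‖z‖ ^ 2) / 2) ≤ 2 / δ := by
  intro z hz
  have hzn : ‖z‖ < 1 := by simpa [dist_zero_right] using hz
  have hai : f_inf z ≠ 0 := hne z hz
  have hd₀ : DifferentiableOn ℂ f₀ (ball (0:ℂ) 1) := h₀.differentiableOn
  have hdi : DifferentiableOn ℂ f_inf (ball (0:ℂ) 1) := hinf.differentiableOn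
  have hD₀ : DifferentiableAt ℂ f₀ z := hd₀.differentiableAt (isOpen_ball.mem_nhds hz)
  have hDi : DifferentiableAt ℂ f_inf z := hdi.differentiableAt (isOpen_ball.mem_nhds hz)
  have hev : f =ᶠ[nhds z] fun w => f₀ w / f_inf w := by
    filter_upwards [isOpen_ball.mem_nhds hz] with w hw using hfdef w hw
  have hdf : deriv f z = (deriv f₀ z * f_inf z - f₀ z * deriv f_inf z) / f_inf z ^ 2 := by
    rw [hev.deriv_eq]
    exact deriv_div hD₀ hDi hai
  have hfz : f z = f₀ z / f_inf z := hfdef z hz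
  -- Schwarz–Pick on each coordinate
  have hb₀ : ∀ w ∈ ball (0:ℂ) 1, ‖f₀ w‖ ≤ 1 := fun w hw => by
    nlinarith [hub w hw, sq_nonneg (‖f₀ w‖ - 1), sq_nonneg ‖f_inf w‖]
  have hbi : ∀ w ∈ ball (0:ℂ) 1, ‖f_inf w‖ ≤ 1 := fun w hw => by
    nlinarith [hub w hw, sq_nonneg (‖f_inf w‖ - 1), sq_nonneg ‖f₀ w‖]
  have hsp₀ : ‖deriv f₀ z‖ * (1 - ‖z‖ ^ 2) ≤ 1 := schwarz_pick f₀ hd₀ hb₀ hz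
  have hspi : ‖deriv f_inf z‖ * (1 - ‖z‖ ^ 2) ≤ 1 := schwarz_pick f_inf hdi hbi hz
  -- abbreviations
  set A := ‖f₀ z‖ with hA_def
  set B := ‖f_inf z‖ with hB_def
  set N := ‖deriv f₀ z * f_inf z - f₀ z * deriv f_inf z‖ with hN_def
  set t := 1 - ‖z‖ ^ 2 with ht_def
  have hB : 0 < B := norm_pos_iff.mpr hai
  have hA0 : 0 ≤ A := norm_nonneg _
  have ht : 0 < t := by nlinarith [norm_nonneg z]
  have hAB : 0 < A ^ 2 + B ^ 2 := by positivity
  have hnorm_df : ‖deriv f z‖ = N / B ^ 2 := by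
    rw [hdf, norm_div, norm_pow]
  have hnorm_f : ‖f z‖ ^ 2 = A ^ 2 / B ^ 2 := by
    rw [hfz, norm_div, div_pow]
  rw [hnorm_df, hnorm_f]
  have hkey : 2 * (N / B ^ 2) / (1 + A ^ 2 / B ^ 2) * (t / 2) = N * t / (A ^ 2 + B ^ 2) := by
    have hden : 1 + A ^ 2 / B ^ 2 = (B ^ 2 + A ^ 2) / B ^ 2 := by field_simp
    rw [hden]
    field_simp
    ring
  rw [hkey, div_le_div_iff₀ hAB hδ]
  -- main estimate
  have hN : N ≤ ‖deriv f₀ z‖ * B + A * ‖deriv f_inf z‖ := by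
    rw [hN_def]
    exact (norm_sub_le _ _).trans (by rw [norm_mul, norm_mul])
  have hNt : N * t ≤ A + B := by
    have h1 : N * t ≤ (‖deriv f₀ z‖ * B + A * ‖deriv f_inf z‖) * t :=
      mul_le_mul_of_nonneg_right hN ht.le
    nlinarith [mul_le_mul_of_nonneg_right hsp₀ hB.le,
      mul_le_mul_of_nonneg_right hspi hA0]
  have hlbz : δ ^ 2 < A ^ 2 + B ^ 2 := hlb z hz
  nlinarith [mul_le_mul_of_nonneg_right hNt hδ.le, sq_nonneg (A + B - δ), sq_nonneg (A - B), hAB]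
end

section
/- Let f₀, f_∞ : 𝔻 → ℂ be analytic with δ² < |f₀(z)|² + |f_∞(z)|² ≤ 1 on 𝔻 for some δ > 0, with f_∞ nowhere zero, and set f = f₀/f_∞. Then along any radial hyperbolic geodesic γ(t) = tanh(t/2)e^{iθ}, the spherical length of the image of γ[0,ρ₀] satisfies L_S(ρ₀) = ∫_0^{ρ₀} (2|f'(γ(t))|/(1+|f(γ(t))|²)) · (1−|γ(t)|²)/2 dt ≤ (2/δ) ρ₀, i.e. L_S(ρ₀) = O(ρ₀). -/
open MeasureTheory Metric Real

lemma abs_tanh_lt_one' (x : ℝ) : |Real.tanh x| < 1 := by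
  have hc := Real.cosh_pos x
  have hsq := Real.cosh_sq x
  rw [Real.tanh_eq_sinh_div_cosh, abs_div, abs_of_pos hc, div_lt_one hc]
  nlinarith [abs_nonneg (Real.sinh x), sq_abs (Real.sinh x)]

/-- Pointwise bound on the spherical-derivative integrand. -/
lemma pointwise_bound (f₀ f_inf : ℂ → ℂ) (δ : ℝ) (hδ : 0 < δ)
    (h₀ : DifferentiableOn ℂ f₀ (ball (0:ℂ) 1))
    (hinf : DifferentiableOn ℂ f_inf (ball (0:ℂ) 1))
    (hne : ∀ z ∈ ball (0:ℂ) 1, f_inf z ≠ 0)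
    (hub : ∀ z ∈ ball (0:ℂ) 1, ‖f₀ z‖ ^ 2 + ‖f_inf z‖ ^ 2 ≤ 1)
    (hlb : ∀ z ∈ ball (0:ℂ) 1, δ ^ 2 < ‖f₀ z‖ ^ 2 + ‖f_inf z‖ ^ 2)
    (f : ℂ → ℂ) (hfdef : ∀ z ∈ ball (0:ℂ) 1, f z = f₀ z / f_inf z)
    (z : ℂ) (hz : z ∈ ball (0:ℂ) 1) :
    (2 * ‖deriv f z‖ / (1 + ‖f z‖ ^ 2)) * ((1 - ‖z‖ ^ 2) / 2) ≤ 2 / δ := by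
  have hz1 : ‖z‖ < 1 := by simpa [mem_ball_zero_iff] using hz
  have hz0 : (0:ℝ) ≤ ‖z‖ := norm_nonneg _
  set a := ‖f₀ z‖ with ha
  set b := ‖f_inf z‖ with hb
  have hbpos : 0 < b := norm_pos_iff.mpr (hne z hz)
  have hs2 : δ ^ 2 < a ^ 2 + b ^ 2 := hlb z hz
  have hs2' : a ^ 2 + b ^ 2 ≤ 1 := hub z hz
  set s := Real.sqrt (a ^ 2 + b ^ 2) with hsdef
  have hspos : 0 < s := Real.sqrt_pos.mpr (by positivity)
  have hssq : s ^ 2 = a ^ 2 + b ^ 2 := Real.sq_sqrt (by positivity)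
  have hδs : δ < s := by
    nlinarith [hspos, hssq]
  -- radius
  set R : ℝ := (1 - ‖z‖ ^ 2) / 2 with hRdef
  have hR : 0 < R := by
    have : ‖z‖ ^ 2 < 1 := by nlinarith
    simp only [hRdef]; linarith
  have hsub : closedBall z R ⊆ ball (0:ℂ) 1 := by
    intro w hw
    rw [mem_closedBall, dist_eq_norm] at hw
    rw [mem_ball_zero_iff]
    have h1 : ‖w‖ ≤ ‖z‖ + ‖w - z‖ := norm_le_norm_add_norm_sub' w z
    have : ‖z‖ + R < 1 := by
      simp only [hRdef]; nlinarith
    linarith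
  -- the auxiliary function
  set h : ℂ → ℂ := fun w => f_inf z * f₀ w - f₀ z * f_inf w with hhdef
  have hhd : DifferentiableOn ℂ h (ball (0:ℂ) 1) :=
    ((h₀.const_smul (f_inf z)).sub (hinf.const_smul (f₀ z)))
  have hhb : ∀ w ∈ closedBall z R, ‖h w‖ ≤ s := by
    intro w hw
    have hw1 : w ∈ ball (0:ℂ) 1 := hsub hw
    have hub' : ‖f₀ w‖ ^ 2 + ‖f_inf w‖ ^ 2 ≤ 1 := hub w hw1
    have h1 : ‖h w‖ ≤ b * ‖f₀ w‖ + a * ‖f_inf w‖ := by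
      calc ‖h w‖ ≤ ‖f_inf z * f₀ w‖ + ‖f₀ z * f_inf w‖ := norm_sub_le _ _
        _ = b * ‖f₀ w‖ + a * ‖f_inf w‖ := by simp [norm_mul, ha, hb]
    have h2 : (b * ‖f₀ w‖ + a * ‖f_inf w‖) ^ 2 ≤ (a ^ 2 + b ^ 2) := by
      nlinarith [norm_nonneg (f₀ w), norm_nonneg (f_inf w), norm_nonneg (f₀ z),
        norm_nonneg (f_inf z), sq_nonneg (b * ‖f_inf w‖ - a * ‖f₀ w‖)]
    have h3 : b * ‖f₀ w‖ + a * ‖f_inf w‖ ≤ s := by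
      have h0 : 0 ≤ b * ‖f₀ w‖ + a * ‖f_inf w‖ := by positivity
      nlinarith [hspos, hssq]
    linarith
  -- derivatives at z
  have hd₀ : HasDerivAt f₀ (deriv f₀ z) z :=
    (h₀.differentiableAt (isOpen_ball.mem_nhds hz)).hasDerivAt
  have hdinf : HasDerivAt f_inf (deriv f_inf z) z :=
    (hinf.differentiableAt (isOpen_ball.mem_nhds hz)).hasDerivAt
  have hdh : HasDerivAt h (f_inf z * deriv f₀ z - f₀ z * deriv f_inf z) z :=
    ((hd₀.const_mul (f_inf z)).sub (hdinf.const_mul (f₀ z)))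
  -- Cauchy estimate for h on ball z R
  have hcauchy : ‖deriv h z‖ ≤ s / R := by
    apply Complex.norm_deriv_le_of_forall_mem_sphere_norm_le hR
    · apply DifferentiableOn.diffContOnCl
      apply hhd.mono
      exact (closure_ball_subset_closedBall).trans hsub
    · intro w hw
      exact hhb w (sphere_subset_closedBall hw)
  have hW : ‖f_inf z * deriv f₀ z - f₀ z * deriv f_inf z‖ ≤ s / R := by
    rw [← hdh.deriv]; exact hcauchy
  -- compute deriv f z
  have hfd : deriv f z = (deriv f₀ z * f_inf z - f₀ z * deriv f_inf z) / (f_inf z) ^ 2 := by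
    have hev : f =ᶠ[nhds z] fun w => f₀ w / f_inf w := by
      filter_upwards [isOpen_ball.mem_nhds hz] with w hw using hfdef w hw
    rw [hev.deriv_eq]
    exact (hd₀.div hdinf (hne z hz)).deriv
  have hnormfd : ‖deriv f z‖ = ‖f_inf z * deriv f₀ z - f₀ z * deriv f_inf z‖ / b ^ 2 := by
    rw [hfd, norm_div, norm_pow, mul_comm (deriv f₀ z) (f_inf z)]
  have hfz : ‖f z‖ ^ 2 = a ^ 2 / b ^ 2 := by
    rw [hfdef z hz, norm_div, div_pow]
  -- put it together
  set W := ‖f_inf z * deriv f₀ z - f₀ z * deriv f_inf z‖ with hWdef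
  have hW0 : 0 ≤ W := norm_nonneg _
  have hb2 : (b:ℝ) ^ 2 ≠ 0 := by positivity
  have hab : (a ^ 2 + b ^ 2 : ℝ) ≠ 0 := by positivity
  have hden : 1 + ‖f z‖ ^ 2 = (a ^ 2 + b ^ 2) / b ^ 2 := by
    rw [hfz]; field_simp; ring
  have key : (2 * ‖deriv f z‖ / (1 + ‖f z‖ ^ 2)) * R = 2 * W * R / (a ^ 2 + b ^ 2) := by
    rw [hnormfd, hden]
    rw [div_div_eq_mul_div]
    field_simp
  rw [key]
  have hWR : W * R ≤ s := by
    calc W * R ≤ (s / R) * R := mul_le_mul_of_nonneg_right hW hR.le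
      _ = s := div_mul_cancel₀ s hR.ne'
  calc 2 * W * R / (a ^ 2 + b ^ 2) ≤ 2 * s / s ^ 2 := by
        rw [hssq]
        refine div_le_div_of_nonneg_right ?_ (by positivity)
        rw [mul_assoc]
        linarith
      _ = 2 / s := by
        rw [pow_two, ← div_div, mul_div_assoc, div_self hspos.ne', mul_one]
      _ ≤ 2 / δ := by
        refine div_le_div_of_nonneg_left (by norm_num) hδ hδs.le

theorem stmt15 (f₀ f_inf : ℂ → ℂ) (δ : ℝ) (hδ : 0 < δ) (θ : ℝ)
    (h₀ : AnalyticOn ℂ f₀ (ball (0:ℂ) 1))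
    (hinf : AnalyticOn ℂ f_inf (ball (0:ℂ) 1))
    (hne : ∀ z ∈ ball (0:ℂ) 1, f_inf z ≠ 0)
    (hub : ∀ z ∈ ball (0:ℂ) 1, ‖f₀ z‖ ^ 2 + ‖f_inf z‖ ^ 2 ≤ 1)
    (hlb : ∀ z ∈ ball (0:ℂ) 1, δ ^ 2 < ‖f₀ z‖ ^ 2 + ‖f_inf z‖ ^ 2)
    (f : ℂ → ℂ) (hfdef : ∀ z ∈ ball (0:ℂ) 1, f z = f₀ z / f_inf z)
    (γ : ℝ → ℂ)
    (hγ : ∀ t, γ t = (Real.tanh (t / 2) : ℂ) * Complex.exp (θ * Complex.I)) :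
    ∀ ρ₀ : ℝ, 0 ≤ ρ₀ →
      (∫ t in (0:ℝ)..ρ₀,
          (2 * ‖deriv f (γ t)‖ / (1 + ‖f (γ t)‖ ^ 2)) * ((1 - ‖γ t‖ ^ 2) / 2))
        ≤ (2 / δ) * ρ₀ := by
  intro ρ₀ hρ₀
  have hγball : ∀ t : ℝ, γ t ∈ ball (0:ℂ) 1 := by
    intro t
    rw [mem_ball_zero_iff, hγ t]
    rw [norm_mul, Complex.norm_exp_ofReal_mul_I,
      mul_one, Complex.norm_real, Real.norm_eq_abs]
    exact abs_tanh_lt_one' _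
  have key : ∀ t ∈ Set.uIoc (0:ℝ) ρ₀,
      ‖(2 * ‖deriv f (γ t)‖ / (1 + ‖f (γ t)‖ ^ 2)) * ((1 - ‖γ t‖ ^ 2) / 2)‖ ≤ 2 / δ := by
    intro t _
    have hb := pointwise_bound f₀ f_inf δ hδ (h₀.differentiableOn) (hinf.differentiableOn)
      hne hub hlb f hfdef (γ t) (hγball t)
    have hnn : 0 ≤ (2 * ‖deriv f (γ t)‖ / (1 + ‖f (γ t)‖ ^ 2)) * ((1 - ‖γ t‖ ^ 2) / 2) := by
      have h1 : ‖γ t‖ < 1 := by simpa [mem_ball_zero_iff] using hγball t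
      have h2 : ‖γ t‖ ^ 2 ≤ 1 := by nlinarith [norm_nonneg (γ t)]
      have h3 : (0:ℝ) ≤ 1 + ‖f (γ t)‖ ^ 2 := by positivity
      have h4 : (0:ℝ) ≤ 2 * ‖deriv f (γ t)‖ := by positivity
      apply mul_nonneg (div_nonneg h4 h3); linarith
    rw [Real.norm_of_nonneg hnn]
    exact hb
  have h1 := intervalIntegral.norm_integral_le_of_norm_le_const key
  calc (∫ t in (0:ℝ)..ρ₀,
          (2 * ‖deriv f (γ t)‖ / (1 + ‖f (γ t)‖ ^ 2)) * ((1 - ‖γ t‖ ^ 2) / 2))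
      ≤ ‖∫ t in (0:ℝ)..ρ₀,
          (2 * ‖deriv f (γ t)‖ / (1 + ‖f (γ t)‖ ^ 2)) * ((1 - ‖γ t‖ ^ 2) / 2)‖ :=
        le_abs_self _
    _ ≤ 2 / δ * |ρ₀ - 0| := h1
    _ = 2 / δ * ρ₀ := by rw [sub_zero, abs_of_nonneg hρ₀]
end
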